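/- arXiv:1810.05607 — 2 statements merged into one kernel-verified Lean document; each statement's English description precedes it below -/
import Mathlib

section
/- Fix reals α, β with 0 ≤ α < 1 and β > 2. For every word w in the language 𝓛 of Σ there exists a word u over {0,…,ℓ} such that the concatenation wu belongs to 𝓛 and k₁(wu) = 0 and k₂(wu) = 0; that is, from every vertex of the Hofbauer-type graph there is a path to the root vertex [0,0]. -/
noncomputable section

namespace IntermediateBeta

/-- The intermediate beta transformation `x ↦ βx + α mod 1`. -/
def F (α β : ℝ) (x : ℝ) : ℝ := Int.fract (β * x + α)

/-- The digit sequence of a point: `Om α β x n` is the index `i` with `F^[n] x ∈ J_i`.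
For `y ∈ [0,1)` we have `y ∈ J_i ↔ ⌊β y + α⌋ = i`. -/
def Om (α β : ℝ) (x : ℝ) : ℕ → ℕ := fun n => (⌊β * ((F α β)^[n] x) + α⌋).toNat

/-- `ℓ = ⌈α + β⌉ - 1`. -/
def ell (α β : ℝ) : ℕ := ⌈α + β⌉₊ - 1

/-- The subshift `Σ`: closure (in the product topology) of the set of digit sequences
of points of `[0,1)`. -/
def Sig (α β : ℝ) : Set (ℕ → ℕ) := closure (Om α β '' Set.Ico (0 : ℝ) 1)

/-- The shift map. -/
def shift (x : ℕ → ℕ) : ℕ → ℕ := fun n => x (n + 1)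

/-- Lexicographic order on one-sided sequences. -/
def lexLe (x y : ℕ → ℕ) : Prop := x = y ∨ ∃ k, (∀ i < k, x i = y i) ∧ x k < y k

/-- The language of a subset `S` of the full shift: the finite words occurring as
initial segments of elements of `S`. -/
def langOf (S : Set (ℕ → ℕ)) (w : List ℕ) : Prop :=
  ∃ x ∈ S, ∀ i : Fin w.length, x i = w.get i

/-- Membership in the language `𝓛` of the subshift `Σ`. -/
def inLang (α β : ℝ) (w : List ℕ) : Prop := langOf (Sig α β) w

/-- The tail segment of `w` of length `k` agrees with the initial segment of `s`
of length `k`. -/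
def tailAgrees (s : ℕ → ℕ) (w : List ℕ) (k : ℕ) : Prop :=
  k ≤ w.length ∧ ∀ i < k, w.getD (w.length - k + i) 0 = s i

/-- `kmax s w` is the length of the longest tail segment of `w` agreeing with an
initial segment of `s` (`k₁(w)` when `s = a`, `k₂(w)` when `s = b`). -/
def kmax (s : ℕ → ℕ) (w : List ℕ) : ℕ := sSup {k | tailAgrees s w k}

/-- `D a b` is the set of lengths `n` such that the initial segment of `b` of
length `n` occurs somewhere in `a`.  Thus `D a b` is the set `𝖣(a)` of the paper
and `D b a` is `𝖣(b)`. -/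
def D (a b : ℕ → ℕ) : Set ℕ := {n | ∃ j, ∀ i < n, b i = a (j + i)}

/-- Gluing of the words `w 0, v 0, w 1, v 1, …, v (n-1), w n`. -/
def glue {n : ℕ} (w : Fin (n + 1) → List ℕ) (v : Fin n → List ℕ) : List ℕ :=
  (List.ofFn fun i : Fin n => w i.castSucc ++ v i).flatten ++ w (Fin.last n)

/-- A collection `G` of words inside the language `lang` has specification: there
is `τ ∈ ℕ` such that any finite list of words of `G` can be glued, with gluing
words from `lang` of length `τ`, into a word of `lang`. -/
def HasSpec (lang G : List ℕ → Prop) : Prop :=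
  ∃ τ : ℕ, 1 ≤ τ ∧ ∀ n : ℕ, ∀ w : Fin (n + 1) → List ℕ, (∀ i, G (w i)) →
    ∃ v : Fin n → List ℕ, (∀ i, (v i).length = τ ∧ lang (v i)) ∧ lang (glue w v)

/-- The initial segment of a sequence, as a finite word. -/
def pre (s : ℕ → ℕ) (n : ℕ) : List ℕ := List.ofFn fun i : Fin n => s i

/-- Lexicographic order for finite words (of equal length). -/
def wordLe (u v : List ℕ) : Prop :=
  u = v ∨ ∃ k, (∀ i < k, u.getD i 0 = v.getD i 0) ∧ u.getD k 0 < v.getD k 0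

/-- Concatenation of a finite word with an infinite sequence. -/
def wcat (w : List ℕ) (x : ℕ → ℕ) : ℕ → ℕ := fun n =>
  if h : n < w.length then w.get ⟨n, h⟩ else x (n - w.length)

section Aux
variable {α β : ℝ} (hα0 : 0 ≤ α) (hα1 : α < 1) (hβ : 2 < β)

def dg (α β : ℝ) (x : ℝ) : ℕ := (⌊β * x + α⌋).toNat

lemma Om_eq (x : ℝ) (n : ℕ) : Om α β x n = dg α β ((F α β)^[n] x) := rfl

lemma Om_add (x : ℝ) (n i : ℕ) : Om α β x (n + i) = Om α β ((F α β)^[n] x) i := by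
  simp [Om, Nat.add_comm n i, Function.iterate_add_apply]

include hα0 hβ in
lemma nonneg_arg {x : ℝ} (hx : 0 ≤ x) : 0 ≤ β * x + α := by nlinarith

include hα0 hβ in
lemma dg_cast {x : ℝ} (hx : 0 ≤ x) : (dg α β x : ℝ) = ⌊β * x + α⌋ := by
  have h0 : (0:ℤ) ≤ ⌊β * x + α⌋ := Int.floor_nonneg.2 (nonneg_arg hα0 hβ hx)
  rw [dg]
  exact_mod_cast congrArg (Int.cast : ℤ → ℝ) (Int.toNat_of_nonneg h0)

include hα0 hβ in
lemma F_eq {x : ℝ} (hx : 0 ≤ x) : F α β x = β * x + α - dg α β x := by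
  rw [F, Int.fract, dg_cast hα0 hβ hx]

lemma F_mem (x : ℝ) : F α β x ∈ Set.Ico (0:ℝ) 1 := ⟨Int.fract_nonneg _, Int.fract_lt_one _⟩

lemma iter_mem {x : ℝ} (hx : x ∈ Set.Ico (0:ℝ) 1) (n : ℕ) : (F α β)^[n] x ∈ Set.Ico (0:ℝ) 1 := by
  induction n with
  | zero => simpa
  | succ n ih => rw [Function.iterate_succ_apply']; exact F_mem _

include hα0 hβ in
lemma dg_bounds {x : ℝ} (hx : 0 ≤ x) : (dg α β x : ℝ) ≤ β * x + α ∧ β * x + α < dg α β x + 1 := by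
  rw [dg_cast hα0 hβ hx]
  exact ⟨Int.floor_le _, Int.lt_floor_add_one _⟩

omit hα0 hβ in
lemma dg_eq_of {x : ℝ} (i : ℕ) (h1 : (i:ℝ) ≤ β * x + α) (h2 : β * x + α < i + 1) :
    dg α β x = i := by
  have : ⌊β * x + α⌋ = (i : ℤ) := by
    rw [Int.floor_eq_iff]
    push_cast; exact ⟨h1, h2⟩
  rw [dg, this]; simp

omit hα1 in
include hα0 hβ in
lemma ell_facts : 2 ≤ ell α β ∧ (ell α β : ℝ) < α + β ∧ α + β ≤ (ell α β : ℝ) + 1 := by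
  have h2 : (2:ℝ) < α + β := by linarith
  have hge : 3 ≤ ⌈α + β⌉₊ := by
    have h := (Nat.lt_ceil (n := 2) (a := α + β)).2 (by exact_mod_cast h2)
    omega
  have hle : α + β ≤ (⌈α + β⌉₊ : ℝ) := Nat.le_ceil _
  have hlt : (⌈α + β⌉₊ : ℝ) < (α + β) + 1 := Nat.ceil_lt_add_one (by linarith)
  have hcast : (ell α β : ℝ) = (⌈α + β⌉₊ : ℝ) - 1 := by
    rw [ell]; push_cast [Nat.cast_sub (by omega : 1 ≤ ⌈α + β⌉₊)]; ring
  refine ⟨by rw [ell]; omega, by rw [hcast]; linarith, by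
    rw [hcast]; linarith⟩


/-- the fixed point in `J_1` -/
def fpv (α β : ℝ) : ℝ := (1 - α) / (β - 1)

include hα0 hα1 hβ in
lemma fpv_facts : (1-α)/β < fpv α β ∧ fpv α β < (2-α)/β ∧ fpv α β ∈ Set.Ico (0:ℝ) 1 ∧
    β * fpv α β + α - 1 = fpv α β := by
  have hb1 : (0:ℝ) < β - 1 := by linarith
  have hb0 : (0:ℝ) < β := by linarith
  have h1 : (0:ℝ) < 1 - α := by linarith
  have hfe : β * fpv α β + α - 1 = fpv α β := by
    rw [fpv]; field_simp; ring
  refine ⟨?_, ?_, ⟨?_, ?_⟩, hfe⟩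
  · rw [fpv, div_lt_div_iff₀ hb0 hb1]; nlinarith
  · rw [fpv, div_lt_div_iff₀ hb1 hb0]; nlinarith
  · rw [fpv]; positivity
  · rw [fpv, div_lt_one hb1]; linarith

include hα0 hα1 hβ in
lemma dg_one' {x : ℝ} (h1 : (1-α)/β ≤ x) (h2 : x < (2-α)/β) : dg α β x = 1 := by
  have hb0 : (0:ℝ) < β := by linarith
  rw [div_le_iff₀ hb0] at h1
  rw [lt_div_iff₀ hb0] at h2
  refine dg_eq_of 1 ?_ ?_ <;> push_cast <;> nlinarith

include hα0 hα1 hβ in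
lemma mem_J1 {x : ℝ} (hx : 0 ≤ x) (h : dg α β x = 1) : (1-α)/β ≤ x ∧ x < (2-α)/β := by
  have hb0 : (0:ℝ) < β := by linarith
  have hb := dg_bounds hα0 hβ hx
  rw [h] at hb; push_cast at hb
  constructor
  · rw [div_le_iff₀ hb0]; nlinarith [hb.1]
  · rw [lt_div_iff₀ hb0]; nlinarith [hb.2]

include hα0 hα1 hβ in
lemma F_J1 {x : ℝ} (hx : 0 ≤ x) (h : dg α β x = 1) :
    F α β x - fpv α β = β * (x - fpv α β) := by
  have hF := F_eq hα0 hβ hx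
  rw [h] at hF
  have hfe := (fpv_facts hα0 hα1 hβ).2.2.2
  push_cast at hF
  rw [hF]; linarith [hfe]

include hα0 hα1 hβ in
lemma iter_ones {x : ℝ} (hx : x ∈ Set.Ico (0:ℝ) 1) (m : ℕ)
    (h : ∀ i < m, dg α β ((F α β)^[i] x) = 1) :
    ∀ j ≤ m, (F α β)^[j] x - fpv α β = β^j * (x - fpv α β) := by
  intro j hj
  induction j with
  | zero => simp
  | succ j ih =>
    rw [Function.iterate_succ_apply',
      F_J1 hα0 hα1 hβ (iter_mem hx j).1 (h j (by omega)), ih (by omega)]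
    ring

include hα0 hα1 hβ in
lemma ones_imp_fp {x : ℝ} (hx : x ∈ Set.Ico (0:ℝ) 1)
    (h : ∀ i, dg α β ((F α β)^[i] x) = 1) : x = fpv α β := by
  by_contra hne
  have hd : 0 < |x - fpv α β| := abs_pos.2 (sub_ne_zero.2 hne)
  obtain ⟨j, hj⟩ := pow_unbounded_of_one_lt (1/|x - fpv α β|) (by linarith : (1:ℝ) < β)
  have hiter := iter_ones hα0 hα1 hβ hx j (fun i _ => h i) j (le_refl j)
  have h1 : |(F α β)^[j] x - fpv α β| < 1 := by
    have h2 := iter_mem (α:=α) (β:=β) hx j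
    have h3 := (fpv_facts hα0 hα1 hβ).2.2.1
    rw [abs_lt]; constructor
    · nlinarith [h2.1, h3.2]
    · nlinarith [h2.2, h3.1]
  rw [hiter, abs_mul, abs_pow, abs_of_pos (by linarith : (0:ℝ) < β)] at h1
  rw [div_lt_iff₀ hd] at hj
  nlinarith [pow_pos (by linarith : (0:ℝ) < β) j]

include hα0 hα1 hβ in
lemma exists_ones_side (m : ℕ) (σ : Bool) :
    ∃ z ∈ Set.Ico (0:ℝ) 1, (if σ then fpv α β < z ∧ z < (2-α)/β else (1-α)/β < z ∧ z < fpv α β) ∧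
      (∀ i < m, dg α β ((F α β)^[i] z) = 1) := by
  obtain ⟨hlb, hub, hmem, hfe⟩ := fpv_facts hα0 hα1 hβ
  have hb0 : (0:ℝ) < β := by linarith
  have hbm : (1:ℝ) ≤ β^m := one_le_pow₀ (by linarith)
  have hwid : (0:ℝ) < (if σ then (2-α)/β - fpv α β else fpv α β - (1-α)/β) := by
    cases σ <;> simp <;> linarith
  set W : ℝ := (if σ then (2-α)/β - fpv α β else fpv α β - (1-α)/β) with hWdef
  set d : ℝ := W / (2 * β^m) with hd
  have hdpos : 0 < d := by rw [hd]; exact div_pos hwid (by positivity)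
  have hdm : ∀ i < m, β^i * d < W := by
    intro i hi
    have h1 : β^i ≤ β^m := pow_le_pow_right₀ (by linarith) (le_of_lt hi)
    rw [hd]
    rw [mul_div_assoc']
    rw [div_lt_iff₀ (by positivity)]
    nlinarith [pow_pos hb0 i, pow_pos hb0 m]
  have hdW : d < W := by
    rw [hd, div_lt_iff₀ (by positivity)]; nlinarith
  set z : ℝ := if σ then fpv α β + d else fpv α β - d with hz
  have hzJ : (1-α)/β < z ∧ z < (2-α)/β := by
    cases σ <;> simp only [hz, hWdef, Bool.false_eq_true, if_false, if_true] at hdW ⊢ <;>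
      constructor <;> linarith
  have hzmem : z ∈ Set.Ico (0:ℝ) 1 := by
    constructor
    · have : (0:ℝ) ≤ (1-α)/β := div_nonneg (by linarith) (le_of_lt hb0)
      linarith [hzJ.1]
    · have : (2-α)/β < 1 := by rw [div_lt_one hb0]; linarith
      linarith [hzJ.2]
  have key : ∀ i, i ≤ m → ((F α β)^[i] z - fpv α β = β^i * (z - fpv α β) ∧
      (i < m → dg α β ((F α β)^[i] z) = 1)) := by
    intro i hi
    induction i with
    | zero =>
      refine ⟨by simp, fun him => dg_one' hα0 hα1 hβ (le_of_lt hzJ.1) hzJ.2⟩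
    | succ i ih =>
      obtain ⟨ih1, ih2⟩ := ih (by omega)
      have hdig := ih2 (by omega)
      constructor
      · rw [Function.iterate_succ_apply', F_J1 hα0 hα1 hβ (iter_mem hzmem i).1 hdig, ih1]; ring
      · intro him
        have habs : (F α β)^[i+1] z - fpv α β = β^(i+1) * (z - fpv α β) := by
          rw [Function.iterate_succ_apply', F_J1 hα0 hα1 hβ (iter_mem hzmem i).1 hdig, ih1]; ring
        have hzd : z - fpv α β = if σ then d else -d := by
          rw [hz]; cases σ <;> simp
        have hbd := hdm (i+1) him
        apply dg_one' hα0 hα1 hβ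
        · cases σ <;> simp only [hzd, Bool.false_eq_true, if_false, if_true] at habs <;>
            simp only [hWdef, Bool.false_eq_true, if_false, if_true] at hbd <;>
            nlinarith [pow_pos hb0 (i+1)]
        · cases σ <;> simp only [hzd, Bool.false_eq_true, if_false, if_true] at habs <;>
            simp only [hWdef, Bool.false_eq_true, if_false, if_true] at hbd <;>
            nlinarith [pow_pos hb0 (i+1)]
  refine ⟨z, hzmem, ?_, fun i hi => (key i (le_of_lt hi)).2 hi⟩
  cases σ <;> simp only [Bool.false_eq_true, if_false, if_true]
  · refine ⟨hzJ.1, ?_⟩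
    have : z = fpv α β - d := by rw [hz]; simp
    linarith
  · refine ⟨?_, hzJ.2⟩
    have : z = fpv α β + d := by rw [hz]; simp
    linarith


include hα0 hα1 hβ in
lemma g1_mem {x : ℝ} (hx : x ∈ Set.Ico (0:ℝ) 1) :
    (x + 1 - α)/β ∈ Set.Ico (0:ℝ) 1 ∧ (1-α)/β ≤ (x + 1 - α)/β ∧ (x + 1 - α)/β < (2-α)/β ∧
      F α β ((x + 1 - α)/β) = x := by
  have hb0 : (0:ℝ) < β := by linarith
  have h1 : (1-α)/β ≤ (x + 1 - α)/β := by gcongr; linarith [hx.1]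
  have h2 : (x + 1 - α)/β < (2-α)/β := by
    rw [div_lt_div_iff₀ hb0 hb0]; nlinarith [hx.2]
  have h3 : (0:ℝ) ≤ (1-α)/β := div_nonneg (by linarith) (le_of_lt hb0)
  have h4 : (2-α)/β < 1 := by rw [div_lt_one hb0]; linarith
  have h5 : β * ((x + 1 - α)/β) + α = x + 1 := by field_simp; ring
  refine ⟨⟨by linarith, by linarith⟩, h1, h2, ?_⟩
  rw [F, h5]
  rw [show x + (1:ℝ) = x + ((1:ℕ):ℝ) by norm_num, Int.fract_add_natCast]
  exact Int.fract_eq_self.2 ⟨hx.1, hx.2⟩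

include hα0 hα1 hβ in
lemma block_core (r m c : ℕ) (z : ℝ) (hzmem : z ∈ Set.Ico (0:ℝ) 1)
    (hzdig : ∀ i < m, dg α β ((F α β)^[i] z) = 1)
    (h0 : α ≤ z + c) (h1 : z + (c:ℝ) < α + β) :
    ∃ t ∈ Set.Ico (0:ℝ) 1, (∀ i < r, Om α β t i = 1) ∧ Om α β t r = c ∧
      (∀ i < m, Om α β t (r+1+i) = 1) := by
  have hb0 : (0:ℝ) < β := by linarith
  set t1 : ℝ := (z + c - α)/β with ht1
  have harg : β * t1 + α = z + c := by rw [ht1]; field_simp; ring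
  have ht1mem : t1 ∈ Set.Ico (0:ℝ) 1 := by
    constructor
    · rw [ht1]; apply div_nonneg _ (le_of_lt hb0); linarith
    · rw [ht1, div_lt_one hb0]; linarith
  have hdgt1 : dg α β t1 = c := by
    apply dg_eq_of c <;> rw [harg]
    · linarith [hzmem.1]
    · push_cast; linarith [hzmem.2]
  have hFt1 : F α β t1 = z := by
    rw [F, harg, show z + (c:ℝ) = z + ((c:ℕ):ℝ) by norm_num, Int.fract_add_natCast]
    exact Int.fract_eq_self.2 ⟨hzmem.1, hzmem.2⟩
  have chain : ∀ j, ∃ T ∈ Set.Ico (0:ℝ) 1, (F α β)^[j] T = t1 ∧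
      (∀ i < j, dg α β ((F α β)^[i] T) = 1) := by
    intro j
    induction j with
    | zero => exact ⟨t1, ht1mem, rfl, by omega⟩
    | succ j ih =>
      obtain ⟨T, hT, hTiter, hTdig⟩ := ih
      obtain ⟨hmem', hlb', hub', hF'⟩ := g1_mem hα0 hα1 hβ hT
      refine ⟨(T + 1 - α)/β, hmem', ?_, ?_⟩
      · rw [Function.iterate_succ_apply, hF', hTiter]
      · intro i hi
        cases i with
        | zero => exact dg_one' hα0 hα1 hβ hlb' hub'
        | succ i => rw [Function.iterate_succ_apply, hF']; exact hTdig i (by omega)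
  obtain ⟨t, htmem, htiter, htdig⟩ := chain r
  refine ⟨t, htmem, fun i hi => htdig i hi, ?_, ?_⟩
  · rw [Om_eq, htiter, hdgt1]
  · intro i hi
    rw [Om_eq, show r + 1 + i = (i + 1) + r by omega, Function.iterate_add_apply, htiter,
      Function.iterate_succ_apply, hFt1]
    exact hzdig i hi

include hα0 hα1 hβ in
lemma exists_block (r m c : ℕ)
    (hc : (1 ≤ c ∧ c + 1 ≤ ell α β) ∨ (c = 0 ∧ α ≤ fpv α β) ∨
      (c = ell α β ∧ fpv α β ≤ α + β - ell α β)) :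
    ∃ t ∈ Set.Ico (0:ℝ) 1, (∀ i < r, Om α β t i = 1) ∧ Om α β t r = c ∧
      (∀ i < m, Om α β t (r+1+i) = 1) := by
  obtain ⟨h2ell, helllt, helle⟩ := ell_facts hα0 hβ
  rcases hc with ⟨h1, h2⟩ | ⟨h1, h2⟩ | ⟨h1, h2⟩
  · obtain ⟨z, hzmem, hzside, hzdig⟩ := exists_ones_side hα0 hα1 hβ m true
    refine block_core hα0 hα1 hβ r m c z hzmem hzdig ?_ ?_
    · have : (1:ℝ) ≤ (c:ℝ) := by exact_mod_cast h1
      linarith [hzmem.1]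
    · have : (c:ℝ) + 1 ≤ (ell α β : ℝ) := by exact_mod_cast h2
      linarith [hzmem.2]
  · obtain ⟨z, hzmem, hzside, hzdig⟩ := exists_ones_side hα0 hα1 hβ m true
    simp only [if_true] at hzside
    refine block_core hα0 hα1 hβ r m c z hzmem hzdig ?_ ?_
    · subst h1; push_cast; linarith [hzside.1]
    · subst h1; push_cast; linarith [hzmem.2, hβ, hα0]
  · obtain ⟨z, hzmem, hzside, hzdig⟩ := exists_ones_side hα0 hα1 hβ m false
    simp only [Bool.false_eq_true, if_false] at hzside
    refine block_core hα0 hα1 hβ r m c z hzmem hzdig ?_ ?_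
    · have h2c : 2 ≤ c := h1 ▸ h2ell
      have : (2:ℝ) ≤ (c:ℝ) := by exact_mod_cast h2c
      linarith [hzmem.1]
    · subst h1; linarith [hzside.2]




lemma mem_Sig {x : ℝ} (hx : x ∈ Set.Ico (0:ℝ) 1) : Om α β x ∈ Sig α β :=
  subset_closure ⟨x, hx, rfl⟩

lemma inLang_intro (w : List ℕ) {x : ℝ} (hx : x ∈ Set.Ico (0:ℝ) 1)
    (h : ∀ i : Fin w.length, Om α β x i = w.get i) : inLang α β w :=
  ⟨Om α β x, mem_Sig hx, h⟩

lemma inLang_elim {w : List ℕ} (hw : inLang α β w) :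
    ∃ x ∈ Set.Ico (0:ℝ) 1, ∀ i : Fin w.length, Om α β x i = w.get i := by
  obtain ⟨y, hy, hyw⟩ := hw
  set U : Set (ℕ → ℕ) := {z | ∀ i : Fin w.length, z i = y i} with hU
  have hUopen : IsOpen U := by
    have : U = ⋂ i : Fin w.length, (fun z : ℕ → ℕ => z i) ⁻¹' {y i} := by
      ext z; simp [hU]
    rw [this]
    exact isOpen_iInter_of_finite fun i =>
      (continuous_apply (i : ℕ)).isOpen_preimage _ (isOpen_discrete _)
  obtain ⟨z, hzU, hzS⟩ := mem_closure_iff.1 hy U hUopen (fun i => rfl)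
  obtain ⟨x, hx, hxz⟩ := hzS
  refine ⟨x, hx, fun i => ?_⟩
  have h1 : Om α β x i = y i := by rw [hxz]; exact hzU i
  rw [h1, hyw i]

include hα0 hα1 hβ in
lemma dg_le_ell {x : ℝ} (hx : x ∈ Set.Ico (0:ℝ) 1) : dg α β x ≤ ell α β := by
  obtain ⟨h2ell, helllt, helle⟩ := ell_facts hα0 hβ
  have hb := dg_bounds hα0 hβ hx.1
  have h1 : (dg α β x : ℝ) < (ell α β : ℝ) + 1 := by nlinarith [hx.2, hb.1]
  have h2 : dg α β x < ell α β + 1 := by exact_mod_cast h1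
  omega

include hα0 hα1 hβ in
lemma sig_le {y : ℕ → ℕ} (hy : y ∈ Sig α β) (n : ℕ) : y n ≤ ell α β := by
  have hclosed : IsClosed {z : ℕ → ℕ | z n ≤ ell α β} := by
    have : {z : ℕ → ℕ | z n ≤ ell α β} = (fun z : ℕ → ℕ => z n) ⁻¹' (Set.Iic (ell α β)) := rfl
    rw [this]
    exact IsClosed.preimage (continuous_apply n) (isClosed_discrete _)
  have hsub : Om α β '' Set.Ico (0:ℝ) 1 ⊆ {z : ℕ → ℕ | z n ≤ ell α β} := by
    rintro _ ⟨x, hx, rfl⟩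
    exact dg_le_ell hα0 hα1 hβ (iter_mem hx n)
  exact closure_minimal hsub hclosed hy

include hα0 hα1 hβ in
lemma a_zero : Om α β 0 0 = 0 := by
  rw [Om_eq, Function.iterate_zero_apply]
  apply dg_eq_of
  · push_cast; nlinarith
  · push_cast; nlinarith

include hα0 hα1 hβ in
lemma b_zero {b : ℕ → ℕ} (hb : b ∈ Sig α β) (hbsup : ∀ y ∈ Sig α β, lexLe y b) :
    b 0 = ell α β := by
  obtain ⟨h2ell, helllt, helle⟩ := ell_facts hα0 hβ
  have hbig : (0:ℝ) < β := by linarith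
  set x0 : ℝ := ((ell α β : ℝ) - α)/β with hx0
  have hx0mem : x0 ∈ Set.Ico (0:ℝ) 1 := by
    constructor
    · apply div_nonneg _ (le_of_lt hbig)
      have : (2:ℝ) ≤ (ell α β : ℝ) := by exact_mod_cast h2ell
      linarith
    · rw [hx0, div_lt_one hbig]; linarith
  have harg : β * x0 + α = (ell α β : ℝ) := by rw [hx0]; field_simp; ring
  have hdg : Om α β x0 0 = ell α β := by
    rw [Om_eq, Function.iterate_zero_apply]
    apply dg_eq_of
    · rw [harg]
    · rw [harg]; linarith
  have hle := sig_le hα0 hα1 hβ hb 0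
  rcases hbsup _ (mem_Sig hx0mem) with heq | ⟨k, hag, hlt⟩
  · rw [← heq, hdg]
  · rcases Nat.eq_zero_or_pos k with rfl | hk
    · rw [hdg] at hlt; omega
    · rw [← hag 0 hk, hdg]

include hα0 hα1 hβ in
lemma F_zero : F α β 0 = α := by
  rw [F]
  have : β * 0 + α = α := by ring
  rw [this]
  exact Int.fract_eq_self.2 ⟨hα0, hα1⟩

include hα0 hα1 hβ in
lemma a_tail_fp (h : ∀ i, Om α β 0 (1+i) = 1) : α = fpv α β := by
  apply ones_imp_fp hα0 hα1 hβ ⟨hα0, hα1⟩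
  intro i
  have h2 := h i
  rw [Om_add 0 1 i, Function.iterate_one, F_zero hα0 hα1 hβ, Om_eq] at h2
  exact h2


set_option maxHeartbeats 1000000 in
include hα0 hα1 hβ in
lemma b_tail_le (hl2 : ell α β = 2) {b : ℕ → ℕ} (hb : b ∈ Sig α β)
    (hbsup : ∀ y ∈ Sig α β, lexLe y b) (h1 : ∀ i, b (1+i) = 1) :
    α + β - 2 ≤ fpv α β := by
  classical
  by_contra hgt
  push_neg at hgt   -- fpv < α + β - 2
  obtain ⟨hlb, hub, hfmem, hfe⟩ := fpv_facts hα0 hα1 hβ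
  obtain ⟨h2ell, helllt, helle⟩ := ell_facts hα0 hβ
  rw [hl2] at helllt helle; push_cast at helllt helle
  have hb0R : (0:ℝ) < β := by linarith
  have hb0ℓ : b 0 = 2 := by rw [← hl2]; exact b_zero hα0 hα1 hβ hb hbsup
  have hw1 : (2-α)/β < 1 := by rw [div_lt_one hb0R]; linarith
  obtain ⟨ε, hεpos, hβε, hε2⟩ : ∃ ε : ℝ, 0 < ε ∧ β * ε ≤ (α + β - 2 - fpv α β)/2 ∧
      ε ≤ (1 - (2-α)/β)/2 := by
    refine ⟨min ((α + β - 2 - fpv α β)/(2*β)) ((1 - (2-α)/β)/2), ?_, ?_, min_le_right _ _⟩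
    · apply lt_min
      · apply div_pos (by linarith) (by linarith)
      · linarith
    · have h := mul_le_mul_of_nonneg_left (min_le_left ((α + β - 2 - fpv α β)/(2*β))
        ((1 - (2-α)/β)/2)) (le_of_lt hb0R)
      have h2 : β * ((α + β - 2 - fpv α β)/(2*β)) = (α + β - 2 - fpv α β)/2 := by
        field_simp
      rw [h2] at h; exact h
  have hfp0 : (0:ℝ) ≤ fpv α β := hfmem.1
  have hw0 : (0:ℝ) ≤ (2-α)/β := div_nonneg (by linarith) (le_of_lt hb0R)
  have hxmem : (1 - ε) ∈ Set.Ico (0:ℝ) 1 := ⟨by nlinarith, by linarith⟩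
  have hdgx : dg α β (1 - ε) = 2 := by
    apply dg_eq_of
    · push_cast; nlinarith
    · push_cast; nlinarith
  have hFx : F α β (1 - ε) = β * (1 - ε) + α - 2 := by
    have h := F_eq hα0 hβ hxmem.1
    rw [hdgx] at h; push_cast at h; exact h
  obtain ⟨y, hyfp, hylt, hFxy⟩ : ∃ y : ℝ, fpv α β < y ∧ y < α + β - 2 ∧ F α β (1 - ε) = y := by
    refine ⟨β * (1 - ε) + α - 2, by nlinarith, by nlinarith, hFx⟩
  have hymem : y ∈ Set.Ico (0:ℝ) 1 := ⟨by linarith, by linarith⟩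
  have hex : ∃ j, (2-α)/β ≤ fpv α β + β^j * (y - fpv α β) := by
    obtain ⟨j, hj⟩ := pow_unbounded_of_one_lt (((2-α)/β - fpv α β)/(y - fpv α β))
      (by linarith : (1:ℝ) < β)
    refine ⟨j, ?_⟩
    rw [div_lt_iff₀ (by linarith)] at hj
    nlinarith
  obtain ⟨s, hsP, hsmin⟩ : ∃ s : ℕ, (2-α)/β ≤ fpv α β + β^s * (y - fpv α β) ∧
      ∀ j < s, fpv α β + β^j * (y - fpv α β) < (2-α)/β := by
    refine ⟨Nat.find hex, Nat.find_spec hex, fun j hj => ?_⟩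
    have := Nat.find_min hex hj
    push_neg at this; exact this
  have key : ∀ j ≤ s, ((F α β)^[j] y - fpv α β = β^j * (y - fpv α β) ∧
      (j < s → dg α β ((F α β)^[j] y) = 1)) := by
    intro j hj
    induction j with
    | zero =>
      refine ⟨by simp, fun hjs => ?_⟩
      rw [Function.iterate_zero_apply]
      have h0 := hsmin 0 hjs
      simp at h0
      exact dg_one' hα0 hα1 hβ (by linarith) (by linarith)
    | succ j ih =>
      obtain ⟨ih1, ih2⟩ := ih (by omega)
      have hdig := ih2 (by omega)
      have hstep : (F α β)^[j+1] y - fpv α β = β^(j+1) * (y - fpv α β) := by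
        rw [Function.iterate_succ_apply', F_J1 hα0 hα1 hβ (iter_mem hymem j).1 hdig, ih1]; ring
      have hpw : (0:ℝ) < β^(j+1) := by positivity
      have hmin := fun hjs => hsmin (j+1) hjs
      refine ⟨hstep, fun hjs => ?_⟩
      apply dg_one' hα0 hα1 hβ
      · nlinarith [hstep]
      · have := hsmin (j+1) hjs
        nlinarith [hstep]
  have hval : (F α β)^[s] y - fpv α β = β^s * (y - fpv α β) := (key s (le_refl s)).1
  have hvlt1 : (F α β)^[s] y < 1 := (iter_mem hymem s).2
  have hvge : (2-α)/β ≤ (F α β)^[s] y := by nlinarith [hval, hsP]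
  have hdgv : dg α β ((F α β)^[s] y) = 2 := by
    rw [div_le_iff₀ hb0R] at hvge
    apply dg_eq_of
    · push_cast; nlinarith
    · push_cast; nlinarith
  have hOm0 : Om α β (1 - ε) 0 = 2 := by rw [Om_eq, Function.iterate_zero_apply]; exact hdgx
  have hOm : ∀ j, Om α β (1 - ε) (1+j) = dg α β ((F α β)^[j] y) := by
    intro j
    rw [Om_add (1 - ε) 1 j, Function.iterate_one, hFxy, Om_eq]
  have hOmJ : ∀ j < s, Om α β (1 - ε) (1+j) = 1 := fun j hj => by
    rw [hOm j]; exact (key j (le_of_lt hj)).2 hj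
  have hOmS : Om α β (1 - ε) (1+s) = 2 := by rw [hOm s]; exact hdgv
  rcases hbsup _ (mem_Sig hxmem) with heq | ⟨k, hag, hlt⟩
  · have := h1 s
    rw [← heq, hOmS] at this; omega
  · rcases Nat.eq_zero_or_pos k with rfl | hk
    · rw [hOm0, hb0ℓ] at hlt; omega
    · rcases Nat.lt_or_ge k (1+s) with hks | hks
      · obtain ⟨j, rfl⟩ : ∃ j, k = 1 + j := ⟨k - 1, by omega⟩
        rw [hOmJ j (by omega), h1 j] at hlt; omega
      · rcases Nat.eq_or_lt_of_le hks with rfl | hks2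
        · rw [hOmS, h1 s] at hlt; omega
        · have := hag (1+s) hks2
          rw [hOmS, h1 s] at this; omega

/-- The word `Wd` is realizable, and the set of possible continuation points after
reading `Wd` is exactly `[u, v)`. -/
def Reach (α β : ℝ) (Wd : List ℕ) (u v : ℝ) : Prop :=
  0 ≤ u ∧ u < v ∧ v ≤ 1 ∧
  (∀ t, u ≤ t → t < v → ∃ x ∈ Set.Ico (0:ℝ) 1,
    (∀ i < Wd.length, Om α β x i = Wd.getD i 0) ∧ (F α β)^[Wd.length] x = t) ∧
  (∀ x ∈ Set.Ico (0:ℝ) 1, (∀ i < Wd.length, Om α β x i = Wd.getD i 0) →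
    u ≤ (F α β)^[Wd.length] x ∧ (F α β)^[Wd.length] x < v)

lemma reach_nil : Reach α β [] 0 1 := by
  refine ⟨le_refl _, by norm_num, le_refl _, fun t ht0 ht1 => ⟨t, ⟨ht0, ht1⟩, by simp, rfl⟩,
    fun x hx _ => by simpa using hx⟩

include hα0 hα1 hβ in
lemma reach_step {W : List ℕ} {u v : ℝ} (h : Reach α β W u v) (d : ℕ)
    (hne : max u (((d:ℝ) - α)/β) < min v (((d:ℝ) + 1 - α)/β)) :
    Reach α β (W ++ [d]) (β * max u (((d:ℝ) - α)/β) + α - d)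
      (β * min v (((d:ℝ) + 1 - α)/β) + α - d) := by
  obtain ⟨hu0, huv, hv1, hfwd, hbwd⟩ := h
  have hb0 : (0:ℝ) < β := by linarith
  set u1 := max u (((d:ℝ) - α)/β) with hu1
  set v1 := min v (((d:ℝ) + 1 - α)/β) with hv1'
  have hu1l : ((d:ℝ) - α)/β ≤ u1 := le_max_right _ _
  have hu1u : u ≤ u1 := le_max_left _ _
  have hv1v : v1 ≤ v := min_le_left _ _
  have hv1r : v1 ≤ ((d:ℝ) + 1 - α)/β := min_le_right _ _
  have hβu1 : (d:ℝ) - α ≤ β * u1 := by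
    rw [div_le_iff₀ hb0] at hu1l; linarith [hu1l]
  have hβv1 : β * v1 ≤ (d:ℝ) + 1 - α := by
    have h := mul_le_mul_of_nonneg_left hv1r (le_of_lt hb0)
    have h2 : β * (((d:ℝ) + 1 - α)/β) = (d:ℝ) + 1 - α := by field_simp
    rw [h2] at h; exact h
  have hlen : (W ++ [d]).length = W.length + 1 := by simp
  have hgetlt : ∀ i < W.length, (W ++ [d]).getD i 0 = W.getD i 0 := fun i hi =>
    List.getD_append _ _ _ _ hi
  have hgetd : (W ++ [d]).getD W.length 0 = d := by
    rw [List.getD_append_right _ _ _ _ (le_refl _)]; simp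
  refine ⟨by linarith, by nlinarith, by linarith, ?_, ?_⟩
  · -- forward
    intro t ht0 ht1
    have ht0' : 0 ≤ t := by linarith
    have ht1' : t < 1 := by linarith
    obtain ⟨x, hx, hpre, hit⟩ := hfwd ((t + d - α)/β)
      (by rw [le_div_iff₀ hb0]; nlinarith)
      (by rw [div_lt_iff₀ hb0]; nlinarith)
    have hs0 : 0 ≤ (t + d - α)/β := by
      apply div_nonneg _ (le_of_lt hb0)
      have : (0:ℝ) ≤ (d:ℝ) := by positivity
      nlinarith [nonneg_arg hα0 hβ (le_refl (0:ℝ))]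
    have harg : β * ((t + d - α)/β) + α = t + d := by field_simp; ring
    have hdg : dg α β ((t + d - α)/β) = d := by
      apply dg_eq_of <;> rw [harg]
      · linarith
      · push_cast; linarith
    have hFs : F α β ((t + d - α)/β) = t := by
      rw [F, harg, show t + (d:ℝ) = t + ((d:ℕ):ℝ) by norm_num, Int.fract_add_natCast]
      exact Int.fract_eq_self.2 ⟨ht0', ht1'⟩
    refine ⟨x, hx, ?_, ?_⟩
    · intro i hi
      rw [hlen] at hi
      rcases Nat.lt_or_ge i W.length with h' | h'
      · rw [hgetlt i h']; exact hpre i h'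
      · have : i = W.length := by omega
        subst this
        rw [hgetd, Om_eq, hit, hdg]
    · rw [hlen, Function.iterate_succ_apply', hit, hFs]
  · -- backward
    intro x hx hpre
    have hpreW : ∀ i < W.length, Om α β x i = W.getD i 0 := fun i hi => by
      rw [← hgetlt i hi]; exact hpre i (by rw [hlen]; omega)
    obtain ⟨hxl, hxr⟩ := hbwd x hx hpreW
    have hdgn : dg α β ((F α β)^[W.length] x) = d := by
      rw [← Om_eq]; rw [← hgetd]; exact hpre W.length (by omega)
    have hsmem := iter_mem (α:=α) (β:=β) hx W.length
    have hdb := dg_bounds hα0 hβ hsmem.1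
    rw [hdgn] at hdb
    have hFs : (F α β)^[W.length + 1] x =
        β * ((F α β)^[W.length] x) + α - d := by
      rw [Function.iterate_succ_apply', F_eq hα0 hβ hsmem.1, hdgn]
    rw [hlen, hFs]
    have hl : ((d:ℝ) - α)/β ≤ (F α β)^[W.length] x := by
      rw [div_le_iff₀ hb0]; linarith [hdb.1]
    have hr : (F α β)^[W.length] x < ((d:ℝ) + 1 - α)/β := by
      rw [lt_div_iff₀ hb0]; push_cast at hdb; linarith [hdb.2]
    have h1 : u1 ≤ (F α β)^[W.length] x := max_le hxl hl
    have h2 : (F α β)^[W.length] x < v1 := lt_min hxr hr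
    constructor
    · nlinarith
    · nlinarith


include hα0 hα1 hβ in
lemma reach_init : ∀ (w : List ℕ) (x : ℝ), x ∈ Set.Ico (0:ℝ) 1 →
    (∀ i < w.length, Om α β x i = w.getD i 0) → ∃ u v, Reach α β w u v := by
  intro w
  induction w using List.reverseRecOn with
  | nil => exact fun x _ _ => ⟨0, 1, reach_nil⟩
  | append_singleton W d ih =>
    intro x hx hpre
    have hb0 : (0:ℝ) < β := by linarith
    have hlen : (W ++ [d]).length = W.length + 1 := by simp
    have hgetlt : ∀ i < W.length, (W ++ [d]).getD i 0 = W.getD i 0 := fun i hi =>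
      List.getD_append _ _ _ _ hi
    have hgetd : (W ++ [d]).getD W.length 0 = d := by
      rw [List.getD_append_right _ _ _ _ (le_refl _)]; simp
    obtain ⟨u, v, hR⟩ := ih x hx (fun i hi => by
      rw [← hgetlt i hi]; exact hpre i (by omega))
    have hbwd := hR.2.2.2.2 x hx (fun i hi => by
      rw [← hgetlt i hi]; exact hpre i (by omega))
    have hdgn : dg α β ((F α β)^[W.length] x) = d := by
      rw [← Om_eq, ← hgetd]; exact hpre W.length (by omega)
    have hsmem := iter_mem (α:=α) (β:=β) hx W.length
    have hdb := dg_bounds hα0 hβ hsmem.1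
    rw [hdgn] at hdb
    have hl : ((d:ℝ) - α)/β ≤ (F α β)^[W.length] x := by
      rw [div_le_iff₀ hb0]; linarith [hdb.1]
    have hr : (F α β)^[W.length] x < ((d:ℝ) + 1 - α)/β := by
      rw [lt_div_iff₀ hb0]; push_cast at hdb; linarith [hdb.2]
    have hne : max u (((d:ℝ) - α)/β) < min v (((d:ℝ) + 1 - α)/β) :=
      lt_of_le_of_lt (max_le hbwd.1 hl) (lt_min hbwd.2 hr)
    exact ⟨_, _, reach_step hα0 hα1 hβ hR d hne⟩

include hα0 hα1 hβ in
lemma reach_full : ∀ (k : ℕ) (W : List ℕ) (u v : ℝ), Reach α β W u v →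
    (2/β)^k ≤ v - u → ∃ W2, Reach α β (W ++ W2) 0 1 := by
  have hb0 : (0:ℝ) < β := by linarith
  intro k
  induction k with
  | zero =>
    intro W u v hR hlen
    simp only [pow_zero] at hlen
    obtain ⟨hu0, huv, hv1, -, -⟩ := id hR
    have hu : u = 0 := by linarith
    have hv : v = 1 := by linarith
    refine ⟨[], ?_⟩
    rw [List.append_nil, ← hu, ← hv]
    exact hR
  | succ k ih =>
    intro W u v hR hlen
    have hpow : (0:ℝ) < (2/β)^k := by positivity
    obtain ⟨hu0, huv, hv1, -, -⟩ := id hR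
    have humem : u ∈ Set.Ico (0:ℝ) 1 := ⟨hu0, by linarith⟩
    set d1 := dg α β u with hd1
    have hdb := dg_bounds hα0 hβ hu0
    rw [← hd1] at hdb
    have hul : ((d1:ℝ) - α)/β ≤ u := by rw [div_le_iff₀ hb0]; linarith [hdb.1]
    have hur : u < ((d1:ℝ) + 1 - α)/β := by rw [lt_div_iff₀ hb0]; linarith [hdb.2]
    have hstep : ∀ d : ℕ, max u (((d:ℝ) - α)/β) < min v (((d:ℝ) + 1 - α)/β) →
        Reach α β (W ++ [d]) (β * max u (((d:ℝ) - α)/β) + α - d)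
          (β * min v (((d:ℝ) + 1 - α)/β) + α - d) := fun d h => reach_step hα0 hα1 hβ hR d h
    rcases le_or_gt v (((d1:ℝ) + 1 - α)/β) with hc1 | hc1
    · -- one branch
      have hmax : max u (((d1:ℝ) - α)/β) = u := max_eq_left hul
      have hmin : min v (((d1:ℝ) + 1 - α)/β) = v := min_eq_left hc1
      have hne : max u (((d1:ℝ) - α)/β) < min v (((d1:ℝ) + 1 - α)/β) := by
        rw [hmax, hmin]; exact huv
      have hR2 := hstep d1 hne
      rw [hmax, hmin] at hR2
      obtain ⟨W2, hW2⟩ := ih (W ++ [d1]) _ _ hR2 (by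
        have : (β * v + α - d1) - (β * u + α - d1) = β * (v - u) := by ring
        rw [this]
        calc (2/β)^k ≤ 2 * (2/β)^k := by linarith
          _ = β * ((2/β)^(k+1)) := by
                have hq : β * (2/β) = 2 := by field_simp
                rw [pow_succ]; linear_combination (-(2/β)^k) * hq
          _ ≤ β * (v - u) := by
              apply mul_le_mul_of_nonneg_left hlen (le_of_lt hb0))
      exact ⟨[d1] ++ W2, by rwa [← List.append_assoc]⟩
    · rcases le_or_gt v (((d1:ℝ) + 2 - α)/β) with hc2 | hc2
      · -- two branches, take the bigger half
        rcases le_or_gt ((v - u)/2) ((((d1:ℝ) + 1 - α)/β) - u) with hh | hh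
        · -- left piece big
          have hmax : max u (((d1:ℝ) - α)/β) = u := max_eq_left hul
          have hmin : min v (((d1:ℝ) + 1 - α)/β) = ((d1:ℝ) + 1 - α)/β :=
            min_eq_right (le_of_lt hc1)
          have hne : max u (((d1:ℝ) - α)/β) < min v (((d1:ℝ) + 1 - α)/β) := by
            rw [hmax, hmin]; exact hur
          have hR2 := hstep d1 hne
          rw [hmax, hmin] at hR2
          obtain ⟨W2, hW2⟩ := ih (W ++ [d1]) _ _ hR2 (by
            have he : (β * (((d1:ℝ) + 1 - α)/β) + α - d1) - (β * u + α - d1)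
                = β * ((((d1:ℝ) + 1 - α)/β) - u) := by ring
            rw [he]
            have hstep1 : β * ((2/β)^(k+1)) ≤ β * (v - u) :=
              mul_le_mul_of_nonneg_left hlen (le_of_lt hb0)
            have hstep2 : β * ((2/β)^(k+1)) = 2 * (2/β)^k := by
              have hq : β * (2/β) = 2 := by field_simp
              rw [pow_succ]; linear_combination (2/β)^k * hq
            have hstep3 : β * ((v-u)/2) ≤ β * ((((d1:ℝ) + 1 - α)/β) - u) :=
              mul_le_mul_of_nonneg_left hh (le_of_lt hb0)
            nlinarith [hstep1, hstep2, hstep3])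
          exact ⟨[d1] ++ W2, by rwa [← List.append_assoc]⟩
        · -- right piece big
          have hc : ((d1+1:ℕ):ℝ) = (d1:ℝ) + 1 := by push_cast; ring
          have hmax : max u ((((d1+1:ℕ):ℝ) - α)/β) = ((d1:ℝ) + 1 - α)/β := by
            rw [hc]; exact max_eq_right (le_of_lt hur)
          have hmin : min v ((((d1+1:ℕ):ℝ) + 1 - α)/β) = v := by
            rw [hc]; apply min_eq_left; rw [show (d1:ℝ) + 1 + 1 - α = (d1:ℝ) + 2 - α by ring]
            exact hc2
          have hne : max u ((((d1+1:ℕ):ℝ) - α)/β) < min v ((((d1+1:ℕ):ℝ) + 1 - α)/β) := by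
            rw [hmax, hmin]; exact hc1
          have hR2 := hstep (d1+1) hne
          rw [hmax, hmin] at hR2
          have h0 : β * (((d1:ℝ) + 1 - α)/β) + α - ((d1+1:ℕ):ℝ) = 0 := by
            rw [hc]; field_simp; ring
          rw [h0] at hR2
          obtain ⟨W2, hW2⟩ := ih (W ++ [d1+1]) _ _ hR2 (by
            have he : β * v + α - ((d1+1:ℕ):ℝ) - 0 = β * (v - (((d1:ℝ) + 1 - α)/β)) := by
              rw [hc]; field_simp; ring
            rw [he]
            have hstep1 : β * ((2/β)^(k+1)) ≤ β * (v - u) :=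
              mul_le_mul_of_nonneg_left hlen (le_of_lt hb0)
            have hstep2 : β * ((2/β)^(k+1)) = 2 * (2/β)^k := by
              have hq : β * (2/β) = 2 := by field_simp
              rw [pow_succ]; linear_combination (2/β)^k * hq
            have hh2 : (v - u)/2 ≤ v - (((d1:ℝ) + 1 - α)/β) := by linarith
            have hstep3 : β * ((v-u)/2) ≤ β * (v - (((d1:ℝ) + 1 - α)/β)) :=
              mul_le_mul_of_nonneg_left hh2 (le_of_lt hb0)
            nlinarith [hstep1, hstep2, hstep3])
          exact ⟨[d1+1] ++ W2, by rwa [← List.append_assoc]⟩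
      · -- J_{d1+1} is contained : full
        have hl2 : ((((d1+1:ℕ)):ℝ) - α)/β = ((d1:ℝ) + 1 - α)/β := by push_cast; ring
        have hr2 : ((((d1+1:ℕ)):ℝ) + 1 - α)/β = ((d1:ℝ) + 2 - α)/β := by push_cast; ring
        have hmax : max u (((((d1+1:ℕ)):ℝ) - α)/β) = ((d1:ℝ) + 1 - α)/β := by
          rw [hl2]; exact max_eq_right (le_of_lt hur)
        have hmin : min v (((((d1+1:ℕ)):ℝ) + 1 - α)/β) = ((d1:ℝ) + 2 - α)/β := by
          rw [hr2]; exact min_eq_right (le_of_lt hc2)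
        have hne : max u (((((d1+1:ℕ)):ℝ) - α)/β) < min v (((((d1+1:ℕ)):ℝ) + 1 - α)/β) := by
          rw [hmax, hmin, div_lt_div_iff₀ hb0 hb0]
          nlinarith
        have hR2 := hstep (d1+1) hne
        rw [hmax, hmin] at hR2
        have h0 : β * (((d1:ℝ) + 1 - α)/β) + α - ((d1+1:ℕ):ℝ) = 0 := by
          push_cast; field_simp; ring
        have h1 : β * (((d1:ℝ) + 2 - α)/β) + α - ((d1+1:ℕ):ℝ) = 1 := by
          push_cast; field_simp; ring
        rw [h0, h1] at hR2
        exact ⟨[d1+1], hR2⟩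




lemma blockLen (w' : List ℕ) (r m c : ℕ) :
    (w' ++ (List.replicate r 1 ++ ([c] ++ List.replicate m 1))).length = w'.length + r + 1 + m := by
  simp [List.length_append, List.length_replicate]
  omega

lemma getD_rep (n i : ℕ) (h : i < n) : (List.replicate n (1:ℕ)).getD i 0 = 1 := by
  rw [List.getD_eq_getElem _ _ (by simpa using h)]
  simp

lemma blockD (w' : List ℕ) (r m c : ℕ) : ∀ j, w'.length ≤ j → j < w'.length + r + 1 + m →
    (w' ++ (List.replicate r 1 ++ ([c] ++ List.replicate m 1))).getD j 0 =
      if j < w'.length + r then 1 else if j = w'.length + r then c else 1 := by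
  intro j hj1 hj2
  have hcons : ([c] ++ List.replicate m (1:ℕ)) = c :: List.replicate m 1 := by simp
  rw [List.getD_append_right _ _ _ _ hj1]
  by_cases h1 : j - w'.length < r
  · rw [List.getD_append _ _ _ _ (by simpa using h1), getD_rep _ _ h1, if_pos (by omega)]
  · rw [List.getD_append_right _ _ _ _ (by simpa using h1)]
    by_cases h2 : j = w'.length + r
    · have h0 : j - w'.length - (List.replicate r (1:ℕ)).length = 0 := by simp; omega
      rw [h0, hcons, List.getD_cons_zero, if_neg (by omega), if_pos h2]
    · have h3 : j - w'.length - (List.replicate r (1:ℕ)).length = (j - w'.length - r - 1) + 1 := by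
        simp; omega
      have h4 : j - w'.length - r - 1 < m := by omega
      rw [h3, hcons, List.getD_cons_succ, getD_rep _ _ h4, if_neg (by omega), if_neg h2]

lemma prefixD (w' : List ℕ) (B : List ℕ) : ∀ j < w'.length, (w' ++ B).getD j 0 = w'.getD j 0 :=
  fun j hj => List.getD_append _ _ _ _ hj

/-- key combinatorial lemma: the chosen suffix block kills all tail agreements. -/
lemma kmax_zero_of (σ : ℕ → ℕ) (w' : List ℕ) (r m c : ℕ)
    (hσ0 : σ 0 ≠ 1) (hc1 : c ≠ 1)
    (hM1 : σ 0 = c → ∃ i, i < m ∧ σ (1+i) ≠ 1)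
    (hM2 : ∀ s, 1 ≤ s → s ≤ w'.length →
      ¬((∀ i < r, σ (s+i) = 1) ∧ σ (s+r) = c ∧ (∀ i < m, σ (s+r+1+i) = 1))) :
    kmax σ (w' ++ (List.replicate r 1 ++ ([c] ++ List.replicate m 1))) = 0 := by
  set B := List.replicate r 1 ++ ([c] ++ List.replicate m (1:ℕ)) with hB
  set W := w' ++ B with hWdef
  have hN : W.length = w'.length + r + 1 + m := blockLen w' r m c
  have hlet : ∀ j, w'.length ≤ j → j < w'.length + r + 1 + m →
      W.getD j 0 = if j < w'.length + r then 1 else if j = w'.length + r then c else 1 :=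
    blockD w' r m c
  have hset : {k | tailAgrees σ W k} = {0} := by
    ext k
    simp only [Set.mem_setOf_eq, Set.mem_singleton_iff]
    constructor
    · rintro ⟨hkle, hag⟩
      rw [hN] at hkle
      by_contra hk0
      have hk1 : 1 ≤ k := by omega
      have hjdef : W.length - k = w'.length + r + 1 + m - k := by rw [hN]
      rcases Nat.lt_or_ge (w'.length + r + 1 + m - k) w'.length with hcase | hcase
      · -- k > m + r + 1 : deep case
        have hs1 : 1 ≤ w'.length - (w'.length + r + 1 + m - k) := by omega
        have hsn : w'.length - (w'.length + r + 1 + m - k) ≤ w'.length := by omega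
        set s := w'.length - (w'.length + r + 1 + m - k) with hs
        have hks : k = s + r + 1 + m := by omega
        apply hM2 s hs1 hsn
        refine ⟨fun i hi => ?_, ?_, fun i hi => ?_⟩
        · have h := hag (s+i) (by omega)
          rw [hjdef, hlet (w'.length + r + 1 + m - k + (s+i)) (by omega) (by omega),
            if_pos (by omega)] at h
          exact h.symm
        · have h := hag (s+r) (by omega)
          rw [hjdef, hlet (w'.length + r + 1 + m - k + (s+r)) (by omega) (by omega),
            if_neg (by omega), if_pos (by omega)] at h
          exact h.symm
        · have h := hag (s+r+1+i) (by omega)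
          rw [hjdef, hlet (w'.length + r + 1 + m - k + (s+r+1+i)) (by omega) (by omega),
            if_neg (by omega), if_neg (by omega)] at h
          exact h.symm
      · -- the suffix lies inside the block
        have h0 := hag 0 (by omega)
        rw [Nat.add_zero, hjdef, hlet (w'.length + r + 1 + m - k) hcase (by omega)] at h0
        by_cases hjr : w'.length + r + 1 + m - k < w'.length + r
        · rw [if_pos hjr] at h0
          exact hσ0 h0.symm
        · by_cases hjr2 : w'.length + r + 1 + m - k = w'.length + r
          · rw [if_neg hjr, if_pos hjr2] at h0
            obtain ⟨i₀, hi₀, hne⟩ := hM1 h0.symm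
            have hk : k = m + 1 := by omega
            have h := hag (1 + i₀) (by omega)
            rw [hjdef, hlet (w'.length + r + 1 + m - k + (1+i₀)) (by omega) (by omega),
              if_neg (by omega), if_neg (by omega)] at h
            exact hne h.symm
          · rw [if_neg hjr, if_neg hjr2] at h0
            exact hσ0 h0.symm
    · rintro rfl
      exact ⟨Nat.zero_le _, fun i hi => absurd hi (Nat.not_lt_zero i)⟩
  rw [kmax, hset]
  exact csSup_singleton 0

/-- run structure of a sequence: either it has an all-ones tail (then long runs pin down
to the tail), or all runs of ones are finite. -/
lemma seq_runs (σ : ℕ → ℕ) : ∃ ra : ℕ, ∀ N r : ℕ, ra ≤ r → ∃ M : ℕ, ∀ m, M ≤ m →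
    ∀ s, 1 ≤ s → s ≤ N → ∀ c : ℕ, c ≠ 1 →
      ¬((∀ i < r, σ (s+i) = 1) ∧ σ (s+r) = c ∧ (∀ i < m, σ (s+r+1+i) = 1)) := by
  classical
  by_cases h : ∃ j, ∀ i, σ (j+i) = 1
  · obtain ⟨j₀, hj₀⟩ := h
    refine ⟨j₀, fun N r hr => ⟨0, fun m _ s hs1 _ c hc ⟨_, h2, _⟩ => ?_⟩⟩
    have h1 : σ (s+r) = 1 := by
      have := hj₀ (s + r - j₀)
      rwa [Nat.add_sub_cancel' (by omega)] at this
    rw [h2] at h1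
    exact hc h1
  · push_neg at h
    choose g hg using h
    refine ⟨0, fun N r _ => ⟨(Finset.range (N+1)).sup (fun s => g (s+r+1)) + 1, ?_⟩⟩
    rintro m hm s hs1 hsN c hc ⟨-, -, h3⟩
    have hgs : g (s+r+1) < m := by
      have hmem : s ∈ Finset.range (N+1) := Finset.mem_range.2 (Nat.lt_succ_of_le hsN)
      have hle : g (s+r+1) ≤ (Finset.range (N+1)).sup (fun s => g (s+r+1)) :=
        Finset.le_sup (f := fun s => g (s+r+1)) (b := s) hmem
      omega
    exact hg (s+r+1) (h3 _ hgs)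

end Aux

/-- **Corollary (path to the root).** For `0 ≤ α < 1` and `β > 2`: for every word
`w ∈ 𝓛` there is a word `u` with `wu ∈ 𝓛` and `k₁(wu) = k₂(wu) = 0`, i.e. from
every vertex of the Hofbauer-type graph there is a path to the root `[0,0]`. -/
theorem exists_path_to_root (α β : ℝ) (hα0 : 0 ≤ α) (hα1 : α < 1) (hβ : 2 < β)
    (b : ℕ → ℕ) (hb : b ∈ Sig α β) (hbsup : ∀ y ∈ Sig α β, lexLe y b)
    (w : List ℕ) (hw : inLang α β w) :
    ∃ u : List ℕ, inLang α β (w ++ u) ∧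
      kmax (Om α β 0) (w ++ u) = 0 ∧ kmax b (w ++ u) = 0 := by
  classical
  obtain ⟨h2ell, helllt, helle⟩ := ell_facts hα0 hβ
  have hb0R : (0:ℝ) < β := by linarith
  have ha0 : Om α β 0 0 = 0 := a_zero hα0 hα1 hβ
  have hb0 : b 0 = ell α β := b_zero hα0 hα1 hβ hb hbsup
  obtain ⟨hlb, hub, hfmem, hfe⟩ := fpv_facts hα0 hα1 hβ
  -- extend w to a word with full follower interval
  obtain ⟨x, hx, hpre⟩ := inLang_elim hw
  have hpre' : ∀ i < w.length, Om α β x i = w.getD i 0 := fun i hi => by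
    have h := hpre ⟨i, hi⟩
    rwa [List.get_eq_getElem, ← List.getD_eq_getElem _ _ hi] at h
  obtain ⟨uu, vv, hR⟩ := reach_init hα0 hα1 hβ w x hx hpre'
  have huv : 0 < vv - uu := by linarith [hR.2.1]
  obtain ⟨k, hk⟩ := exists_pow_lt_of_lt_one huv
    (by rw [div_lt_one hb0R]; linarith : 2/β < 1)
  obtain ⟨W2, hFull⟩ := reach_full hα0 hα1 hβ k w uu vv hR (le_of_lt hk)
  -- choose the letter c of the block
  obtain ⟨c, hc1, hcreal, hcA, hcB⟩ :
      ∃ c : ℕ, c ≠ 1 ∧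
        ((1 ≤ c ∧ c + 1 ≤ ell α β) ∨ (c = 0 ∧ α ≤ fpv α β) ∨
          (c = ell α β ∧ fpv α β ≤ α + β - ell α β)) ∧
        (c = 0 → ∃ i, Om α β 0 (1+i) ≠ 1) ∧
        (c = ell α β → ∃ i, b (1+i) ≠ 1) := by
    rcases Nat.lt_or_ge (ell α β) 3 with hell2 | hell3
    · have hl2 : ell α β = 2 := by omega
      by_cases hA1 : ∀ i, Om α β 0 (1+i) = 1
      · have hαfp : α = fpv α β := a_tail_fp hα0 hα1 hβ hA1
        refine ⟨2, by omega, Or.inr (Or.inr ⟨hl2.symm, ?_⟩),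
          fun h => absurd h (by omega), fun _ => ?_⟩
        · rw [hl2]; push_cast; linarith
        · by_contra hB1
          push_neg at hB1
          have hcon := b_tail_le hα0 hα1 hβ hl2 hb hbsup hB1
          linarith
      · by_cases hαfp : α ≤ fpv α β
        · exact ⟨0, by omega, Or.inr (Or.inl ⟨rfl, hαfp⟩), fun _ => not_forall.mp hA1,
            fun h => absurd h (by omega)⟩
        · push_neg at hαfp
          have h1 : 1 < α * β := by
            have h := hαfp
            simp only [fpv] at h
            rw [div_lt_iff₀ (by linarith)] at h
            nlinarith
          have h2 : fpv α β ≤ α + β - 2 := by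
            simp only [fpv]
            rw [div_le_iff₀ (by linarith)]
            nlinarith
          refine ⟨2, by omega, Or.inr (Or.inr ⟨hl2.symm, by rw [hl2]; push_cast; linarith⟩),
            fun h => absurd h (by omega), fun _ => ?_⟩
          by_contra hB1
          push_neg at hB1
          have hcon := b_tail_le hα0 hα1 hβ hl2 hb hbsup hB1
          linarith
    · exact ⟨2, by omega, Or.inl ⟨by omega, by omega⟩, fun h => absurd h (by omega),
        fun h2 => absurd h2 (by omega)⟩
  -- choose r and m
  obtain ⟨ra, hra⟩ := seq_runs (Om α β 0)
  obtain ⟨rb, hrb⟩ := seq_runs b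
  obtain ⟨Ma, hMa⟩ := hra (w ++ W2).length (ra + rb) (by omega)
  obtain ⟨Mb, hMb⟩ := hrb (w ++ W2).length (ra + rb) (by omega)
  obtain ⟨wa, hwa⟩ : ∃ wa, (c = 0 → Om α β 0 (1 + wa) ≠ 1) := by
    by_cases h : c = 0
    · obtain ⟨i, hi⟩ := hcA h; exact ⟨i, fun _ => hi⟩
    · exact ⟨0, fun hcc => absurd hcc h⟩
  obtain ⟨wb, hwb⟩ : ∃ wb, (c = ell α β → b (1 + wb) ≠ 1) := by
    by_cases h : c = ell α β
    · obtain ⟨i, hi⟩ := hcB h; exact ⟨i, fun _ => hi⟩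
    · exact ⟨0, fun hcc => absurd hcc h⟩
  -- the block as an itinerary
  obtain ⟨t, htmem, ht1, htc, ht2⟩ := exists_block hα0 hα1 hβ (ra + rb)
    (Ma + Mb + wa + wb + 1) c hcreal
  obtain ⟨y, hy, hyw', hyt⟩ := hFull.2.2.2.1 t htmem.1 htmem.2
  have hWlen := blockLen (w ++ W2) (ra + rb) (Ma + Mb + wa + wb + 1) c
  have hyW : ∀ i < ((w ++ W2) ++ (List.replicate (ra + rb) 1 ++
      ([c] ++ List.replicate (Ma + Mb + wa + wb + 1) (1:ℕ)))).length,
      Om α β y i = ((w ++ W2) ++ (List.replicate (ra + rb) 1 ++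
        ([c] ++ List.replicate (Ma + Mb + wa + wb + 1) (1:ℕ)))).getD i 0 := by
    intro i hi
    rw [hWlen] at hi
    rcases Nat.lt_or_ge i (w ++ W2).length with h' | h'
    · rw [prefixD _ _ i h']; exact hyw' i h'
    · rw [blockD (w ++ W2) (ra + rb) (Ma + Mb + wa + wb + 1) c i h' hi]
      have hOm := Om_add (α:=α) (β:=β) y ((w ++ W2).length) (i - (w ++ W2).length)
      rw [hyt, show (w ++ W2).length + (i - (w ++ W2).length) = i from by omega] at hOm
      rw [hOm]
      by_cases h1 : i < (w ++ W2).length + (ra + rb)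
      · rw [if_pos h1]; exact ht1 _ (by omega)
      · by_cases h2 : i = (w ++ W2).length + (ra + rb)
        · rw [if_neg h1, if_pos h2, show i - (w ++ W2).length = ra + rb from by omega]
          exact htc
        · rw [if_neg h1, if_neg h2, show i - (w ++ W2).length =
            (ra + rb) + 1 + (i - (w ++ W2).length - (ra + rb) - 1) from by omega]
          exact ht2 _ (by omega)
  refine ⟨W2 ++ (List.replicate (ra + rb) 1 ++
      ([c] ++ List.replicate (Ma + Mb + wa + wb + 1) (1:ℕ))), ?_, ?_, ?_⟩
  · rw [← List.append_assoc]
    exact inLang_intro _ hy (fun i => by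
      rw [List.get_eq_getElem, ← List.getD_eq_getElem _ _ i.isLt]
      exact hyW i i.isLt)
  · rw [← List.append_assoc]
    apply kmax_zero_of _ _ _ _ _ (by rw [ha0]; omega) hc1
    · intro h0
      rw [ha0] at h0
      exact ⟨wa, by omega, hwa h0.symm⟩
    · intro s hs1 hsn
      exact hMa (Ma + Mb + wa + wb + 1) (by omega) s hs1 hsn c hc1
  · rw [← List.append_assoc]
    apply kmax_zero_of _ _ _ _ _ (by rw [hb0]; omega) hc1
    · intro h0
      rw [hb0] at h0
      exact ⟨wb, by omega, hwb h0.symm⟩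
    · intro s hs1 hsn
      exact hMb (Ma + Mb + wa + wb + 1) (by omega) s hs1 hsn c hc1


end IntermediateBeta
end
end

section
/- Let Σ ⊆ {0,…,p}^ℕ be a subshift containing at least two points whose language 𝓛 has specification, and let φ : Σ → ℝ be a continuous function with the Bowen property. Then for every x ∈ Σ, P(φ, 𝒟) < P(φ, 𝓛), where 𝒟 = {(x_1,…,x_n) : n ∈ ℕ} is the set of initial segments of x. -/
noncomputable section

namespace Subshift

/-- The shift map on one-sided sequences. -/
def shift (x : ℕ → ℕ) : ℕ → ℕ := fun n => x (n + 1)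

/-- `S` is a subshift of the full shift on the alphabet `{0,…,p}`: a nonempty
closed shift-invariant set of sequences taking values in `{0,…,p}`. -/
def IsSubshift (p : ℕ) (S : Set (ℕ → ℕ)) : Prop :=
  S.Nonempty ∧ IsClosed S ∧ (∀ x ∈ S, shift x ∈ S) ∧ ∀ x ∈ S, ∀ n, x n ≤ p

/-- The language of `S`: finite words occurring as initial segments of points of `S`. -/
def lang (S : Set (ℕ → ℕ)) : Set (List ℕ) :=
  {w | ∃ x ∈ S, ∀ i : Fin w.length, x i = w.get i}

/-- Birkhoff sums `(S_n φ)(x)`. -/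
def birkhoff (φ : (ℕ → ℕ) → ℝ) (n : ℕ) (x : ℕ → ℕ) : ℝ :=
  ∑ i ∈ Finset.range n, φ (shift^[i] x)

/-- `φ(w) = sup {(S_{|w|} φ)(x) : x ∈ S, x starts with w}`. -/
def phiSup (S : Set (ℕ → ℕ)) (φ : (ℕ → ℕ) → ℝ) (w : List ℕ) : ℝ :=
  sSup (birkhoff φ w.length '' {x ∈ S | ∀ i : Fin w.length, x i = w.get i})

/-- The partition sum `Λ_n(φ, ℋ) = Σ_{w ∈ ℋ_n} exp (φ(w))`. -/
def Lam (S : Set (ℕ → ℕ)) (φ : (ℕ → ℕ) → ℝ) (H : Set (List ℕ)) (n : ℕ) : ℝ :=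
  ∑' w : {w : List ℕ // w ∈ H ∧ w.length = n}, Real.exp (phiSup S φ w.1)

/-- The topological pressure `P(φ, ℋ) = limsup (1/n) log Λ_n(φ, ℋ)`. -/
def pressure (S : Set (ℕ → ℕ)) (φ : (ℕ → ℕ) → ℝ) (H : Set (List ℕ)) : ℝ :=
  Filter.limsup (fun n : ℕ => Real.log (Lam S φ H n) / n) Filter.atTop

/-- The Bowen property for a potential `φ`. -/
def Bowen (S : Set (ℕ → ℕ)) (φ : (ℕ → ℕ) → ℝ) : Prop :=
  ∃ V > (0 : ℝ), ∀ n : ℕ, ∀ x ∈ S, ∀ y ∈ S, (∀ i < n, x i = y i) →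
    |birkhoff φ n x - birkhoff φ n y| ≤ V

/-- The set `𝒟` of initial segments of a sequence `x`. -/
def initialSegs (x : ℕ → ℕ) : Set (List ℕ) :=
  {w | ∃ n : ℕ, w = List.ofFn fun i : Fin n => x i}

/-- Gluing of the words `w 0, v 0, w 1, v 1, …, v (n-1), w n`. -/
def glue {n : ℕ} (w : Fin (n + 1) → List ℕ) (v : Fin n → List ℕ) : List ℕ :=
  (List.ofFn fun i : Fin n => w i.castSucc ++ v i).flatten ++ w (Fin.last n)

/-- The language of `S` has specification. -/
def HasSpec (S : Set (ℕ → ℕ)) : Prop :=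
  ∃ τ : ℕ, 1 ≤ τ ∧ ∀ n : ℕ, ∀ w : Fin (n + 1) → List ℕ, (∀ i, w i ∈ lang S) →
    ∃ v : Fin n → List ℕ, (∀ i, (v i).length = τ ∧ v i ∈ lang S) ∧ glue w v ∈ lang S
-- ===== auxiliary =====

/-- agreement of a point with a word -/
def Agr (y : ℕ → ℕ) (w : List ℕ) : Prop := ∀ i : Fin w.length, y i = w.get i

lemma agr_iff {y : ℕ → ℕ} {w : List ℕ} :
    Agr y w ↔ ∀ i, (h : i < w.length) → y i = w[i] := by
  constructor
  · intro H i h; exact H ⟨i, h⟩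
  · intro H i; exact H i i.2

lemma mem_lang_iff {S : Set (ℕ → ℕ)} {w : List ℕ} :
    w ∈ lang S ↔ ∃ y ∈ S, Agr y w := Iff.rfl

lemma shift_iter_apply (y : ℕ → ℕ) (k n : ℕ) : shift^[k] y n = y (n + k) := by
  induction k generalizing y n with
  | zero => simp
  | succ k ih =>
    rw [Function.iterate_succ_apply]
    rw [ih (shift y) n]
    show y (n + k + 1) = y (n + (k + 1))
    congr 1

lemma shift_iter_mem {p : ℕ} {S : Set (ℕ → ℕ)} (hS : IsSubshift p S)
    {y : ℕ → ℕ} (hy : y ∈ S) (k : ℕ) : shift^[k] y ∈ S := by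
  induction k with
  | zero => simpa
  | succ k ih => rw [Function.iterate_succ_apply']; exact hS.2.2.1 _ ih

lemma birkhoff_add (φ : (ℕ → ℕ) → ℝ) (k l : ℕ) (y : ℕ → ℕ) :
    birkhoff φ (k + l) y = birkhoff φ k y + birkhoff φ l (shift^[k] y) := by
  unfold birkhoff
  rw [Finset.sum_range_add]
  congr 1
  refine Finset.sum_congr rfl fun i _ => ?_
  rw [add_comm k i, Function.iterate_add_apply]

end Subshift
namespace Subshift

lemma agr_of_prefix {y : ℕ → ℕ} {a w : List ℕ} (hp : a <+: w) (h : Agr y w) : Agr y a := by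
  rw [agr_iff] at h ⊢
  intro i hi
  rw [h i (hi.trans_le hp.length_le)]
  exact (List.IsPrefix.getElem hp hi).symm

lemma agr_drop {y : ℕ → ℕ} {w : List ℕ} (h : Agr y w) (k : ℕ) :
    Agr (shift^[k] y) (w.drop k) := by
  rw [agr_iff] at h ⊢
  intro i hi
  rw [List.getElem_drop, shift_iter_apply]
  rw [h (i + k) (by simp at hi; omega)]
  simp only [show k + i = i + k by omega]

lemma prefix_mem_lang {S : Set (ℕ → ℕ)} {a w : List ℕ} (hp : a <+: w) (hw : w ∈ lang S) :
    a ∈ lang S := by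
  obtain ⟨y, hy, hagr⟩ := hw
  exact ⟨y, hy, agr_of_prefix hp hagr⟩

lemma drop_mem_lang {p : ℕ} {S : Set (ℕ → ℕ)} (hS : IsSubshift p S) {w : List ℕ}
    (hw : w ∈ lang S) (k : ℕ) : w.drop k ∈ lang S := by
  obtain ⟨y, hy, hagr⟩ := hw
  exact ⟨shift^[k] y, shift_iter_mem hS hy k, agr_drop hagr k⟩

/-- canonical prefix word of a point -/
def pref (x : ℕ → ℕ) (n : ℕ) : List ℕ := List.ofFn fun i : Fin n => x i

@[simp] lemma pref_length (x : ℕ → ℕ) (n : ℕ) : (pref x n).length = n := by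
  simp [pref]

lemma agr_pref (x : ℕ → ℕ) (n : ℕ) : Agr x (pref x n) := by
  rw [agr_iff]
  intro i hi
  simp [pref]

lemma pref_mem_lang {S : Set (ℕ → ℕ)} {x : ℕ → ℕ} (hx : x ∈ S) (n : ℕ) :
    pref x n ∈ lang S := ⟨x, hx, agr_pref x n⟩

lemma pref_prefix (x : ℕ → ℕ) {j j' : ℕ} (h : j ≤ j') : pref x j <+: pref x j' := by
  rw [List.prefix_iff_eq_take]
  apply List.ext_getElem (by simp [pref]; omega)
  intro i h1 h2
  simp only [pref, List.getElem_take, List.getElem_ofFn]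

lemma agr_append_right {y : ℕ → ℕ} {a b : List ℕ} (h : Agr y (a ++ b)) :
    Agr (shift^[a.length] y) b := by
  have := agr_drop h a.length
  rwa [List.drop_left] at this

lemma letters_le {p : ℕ} {S : Set (ℕ → ℕ)} (hS : IsSubshift p S) {w : List ℕ}
    (hw : w ∈ lang S) : ∀ i, (h : i < w.length) → w[i] ≤ p := by
  intro i h
  obtain ⟨y, hy, hagr⟩ := hw
  rw [← agr_iff.1 hagr i h]
  exact hS.2.2.2 y hy i

lemma finite_langlen {p : ℕ} {S : Set (ℕ → ℕ)} (hS : IsSubshift p S) (n : ℕ) :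
    {w : List ℕ | w ∈ lang S ∧ w.length = n}.Finite := by
  have : {w : List ℕ | w ∈ lang S ∧ w.length = n} ⊆
      (fun f : Fin n → Fin (p + 1) => List.ofFn fun i => (f i : ℕ)) '' Set.univ := by
    rintro w ⟨hw, hlen⟩
    refine ⟨fun i => ⟨w[(i : ℕ)]'(by omega), ?_⟩, trivial, ?_⟩
    · have := letters_le hS hw i (by omega); omega
    · subst hlen
      exact List.ofFn_getElem
  exact ((Set.finite_univ).image _).subset this

end Subshift
namespace Subshift

section PhiSup

variable {p : ℕ} {S : Set (ℕ → ℕ)} {φ : (ℕ → ℕ) → ℝ} {C V : ℝ}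

lemma birkhoff_abs_le {y : ℕ → ℕ} (hS : IsSubshift p S) (hC : ∀ z ∈ S, |φ z| ≤ C)
    (hy : y ∈ S) (n : ℕ) : |birkhoff φ n y| ≤ n * C := by
  unfold birkhoff
  calc |∑ i ∈ Finset.range n, φ (shift^[i] y)| ≤ ∑ i ∈ Finset.range n, |φ (shift^[i] y)| :=
        Finset.abs_sum_le_sum_abs _ _
    _ ≤ ∑ _i ∈ Finset.range n, C :=
        Finset.sum_le_sum fun i _ => hC _ (shift_iter_mem hS hy i)
    _ = n * C := by simp [mul_comm]

lemma bddAbove_birkhoff_image (hS : IsSubshift p S) (hC : ∀ z ∈ S, |φ z| ≤ C) (w : List ℕ) :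
    BddAbove (birkhoff φ w.length '' {x ∈ S | ∀ i : Fin w.length, x i = w.get i}) := by
  refine ⟨w.length * C, ?_⟩
  rintro _ ⟨z, ⟨hz, _⟩, rfl⟩
  exact (abs_le.1 (birkhoff_abs_le hS hC hz w.length)).2

lemma le_phiSup (hS : IsSubshift p S) (hC : ∀ z ∈ S, |φ z| ≤ C)
    {y : ℕ → ℕ} {w : List ℕ} (hy : y ∈ S) (ha : Agr y w) :
    birkhoff φ w.length y ≤ phiSup S φ w :=
  le_csSup (bddAbove_birkhoff_image hS hC w) ⟨y, ⟨hy, ha⟩, rfl⟩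

lemma phiSup_le
    (hV : ∀ n : ℕ, ∀ a ∈ S, ∀ b ∈ S, (∀ i < n, a i = b i) → |birkhoff φ n a - birkhoff φ n b| ≤ V)
    {y : ℕ → ℕ} {w : List ℕ} (hy : y ∈ S) (ha : Agr y w) :
    phiSup S φ w ≤ birkhoff φ w.length y + V := by
  refine csSup_le ⟨_, ⟨y, ⟨hy, ha⟩, rfl⟩⟩ ?_
  rintro _ ⟨z, ⟨hz, hza⟩, rfl⟩
  have hagree : ∀ i < w.length, z i = y i := by
    intro i hi
    rw [agr_iff.1 hza i hi, agr_iff.1 ha i hi]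
  have := hV w.length z hz y hy hagree
  have := abs_le.1 this
  linarith [this.2]

lemma phiSup_le_bound (hS : IsSubshift p S) (hC : ∀ z ∈ S, |φ z| ≤ C)
    {w : List ℕ} (hw : w ∈ lang S) : phiSup S φ w ≤ w.length * C := by
  obtain ⟨y, hy, ha⟩ := hw
  refine csSup_le ⟨_, ⟨y, ⟨hy, ha⟩, rfl⟩⟩ ?_
  rintro _ ⟨z, ⟨hz, _⟩, rfl⟩
  exact (abs_le.1 (birkhoff_abs_le hS hC hz w.length)).2

lemma neg_le_phiSup (hS : IsSubshift p S) (hC : ∀ z ∈ S, |φ z| ≤ C)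
    {w : List ℕ} (hw : w ∈ lang S) : -(w.length * C) ≤ phiSup S φ w := by
  obtain ⟨y, hy, ha⟩ := hw
  calc -(w.length * C) ≤ birkhoff φ w.length y :=
        (abs_le.1 (birkhoff_abs_le hS hC hy w.length)).1
    _ ≤ phiSup S φ w := le_phiSup hS hC hy ha

lemma phiSup_nil (hS : IsSubshift p S) : phiSup S φ [] = 0 := by
  unfold phiSup
  obtain ⟨y, hy⟩ := hS.1
  have h1 : {x ∈ S | ∀ i : Fin ([] : List ℕ).length, x i = [].get i} = S := by
    ext z; simp
  have h2 : birkhoff φ ([] : List ℕ).length = fun _ => (0 : ℝ) := by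
    funext z; simp [birkhoff]
  rw [h1, h2, Set.Nonempty.image_const ⟨y, hy⟩]
  exact csSup_singleton 0

lemma phiSup_append_le (hS : IsSubshift p S) (hC : ∀ z ∈ S, |φ z| ≤ C)
    {a b : List ℕ} (hab : a ++ b ∈ lang S) :
    phiSup S φ (a ++ b) ≤ phiSup S φ a + phiSup S φ b := by
  obtain ⟨y, hy, ha⟩ := hab
  refine csSup_le ⟨_, ⟨y, ⟨hy, ha⟩, rfl⟩⟩ ?_
  rintro _ ⟨z, ⟨hz, hza⟩, rfl⟩
  have hlen : (a ++ b).length = a.length + b.length := List.length_append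
  rw [hlen, birkhoff_add]
  have h1 : birkhoff φ a.length z ≤ phiSup S φ a :=
    le_phiSup hS hC hz (agr_of_prefix (List.prefix_append a b) hza)
  have h2 : birkhoff φ b.length (shift^[a.length] z) ≤ phiSup S φ b :=
    le_phiSup hS hC (shift_iter_mem hS hz a.length) (agr_append_right hza)
  linarith

end PhiSup

end Subshift
namespace Subshift

section Words

variable {p : ℕ} {S : Set (ℕ → ℕ)} {φ : (ℕ → ℕ) → ℝ}

open Classical in
/-- finset of words of length `n` in the language -/
def Wn (S : Set (ℕ → ℕ)) (n : ℕ) : Finset (List ℕ) :=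
  if h : {w : List ℕ | w ∈ lang S ∧ w.length = n}.Finite then h.toFinset else ∅

lemma mem_Wn (hS : IsSubshift p S) {n : ℕ} {w : List ℕ} :
    w ∈ Wn S n ↔ w ∈ lang S ∧ w.length = n := by
  rw [Wn, dif_pos (finite_langlen hS n)]
  simp

/-- the partition sum as a finite sum -/
def LamF (S : Set (ℕ → ℕ)) (φ : (ℕ → ℕ) → ℝ) (n : ℕ) : ℝ :=
  ∑ w ∈ Wn S n, Real.exp (phiSup S φ w)

lemma Lam_lang_eq (hS : IsSubshift p S) (n : ℕ) :
    Lam S φ (lang S) n = LamF S φ n := by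
  rw [Lam, LamF]
  rw [← Finset.tsum_subtype (Wn S n) (fun w => Real.exp (phiSup S φ w))]
  exact Equiv.tsum_eq (Equiv.subtypeEquivRight fun w => (mem_Wn hS).symm)
    (fun w : {w : List ℕ // w ∈ Wn S n} => Real.exp (phiSup S φ w.1))

lemma Lam_initialSegs_eq (x : ℕ → ℕ) (n : ℕ) :
    Lam S φ (initialSegs x) n = Real.exp (phiSup S φ (pref x n)) := by
  rw [Lam]
  have hmem : pref x n ∈ initialSegs x ∧ (pref x n).length = n := ⟨⟨n, rfl⟩, by simp⟩
  haveI : Unique {w : List ℕ // w ∈ initialSegs x ∧ w.length = n} := by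
    refine ⟨⟨⟨pref x n, hmem⟩⟩, ?_⟩
    rintro ⟨w, ⟨k, rfl⟩, hlen⟩
    have : k = n := by simpa using hlen
    subst this
    rfl
  rw [tsum_eq_single (⟨pref x n, hmem⟩ : {w : List ℕ // w ∈ initialSegs x ∧ w.length = n})
    (fun b hb => absurd (Subsingleton.elim b _) hb)]

end Words

end Subshift
namespace Subshift

section Glue

variable {p : ℕ} {S : Set (ℕ → ℕ)} {φ : (ℕ → ℕ) → ℝ} {C V : ℝ} {τ : ℕ}

lemma glue_two (a b : List ℕ) (v : Fin 1 → List ℕ) :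
    glue ![a, b] v = a ++ v 0 ++ b := by
  simp [glue, List.ofFn_succ, Fin.last]

lemma spec_pair (hspec : HasSpec S) :
    ∃ τ : ℕ, 1 ≤ τ ∧ ∀ a ∈ lang S, ∀ b ∈ lang S,
      ∃ v : List ℕ, v.length = τ ∧ a ++ v ++ b ∈ lang S := by
  obtain ⟨τ, hτ, h⟩ := hspec
  refine ⟨τ, hτ, fun a ha b hb => ?_⟩
  obtain ⟨v, hv, hg⟩ := h 1 ![a, b] (by
    intro i
    fin_cases i <;> simpa)
  rw [glue_two] at hg
  exact ⟨v 0, (hv 0).1, hg⟩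

/-- the key gluing estimate -/
lemma glue_est (hS : IsSubshift p S) (hC : ∀ z ∈ S, |φ z| ≤ C)
    (hV : ∀ n : ℕ, ∀ a ∈ S, ∀ b ∈ S, (∀ i < n, a i = b i) → |birkhoff φ n a - birkhoff φ n b| ≤ V)
    (hsp : ∀ a ∈ lang S, ∀ b ∈ lang S, ∃ v : List ℕ, v.length = τ ∧ a ++ v ++ b ∈ lang S)
    {a b : List ℕ} (ha : a ∈ lang S) (hb : b ∈ lang S) :
    ∃ g : List ℕ, g ∈ lang S ∧ g.length = a.length + τ + b.length ∧
      g.take a.length = a ∧ g.drop (a.length + τ) = b ∧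
      phiSup S φ a + phiSup S φ b - (2 * V + τ * C) ≤ phiSup S φ g := by
  obtain ⟨v, hvlen, hg⟩ := hsp a ha b hb
  refine ⟨a ++ v ++ b, hg, by simp [hvlen]; omega, ?_, ?_, ?_⟩
  · rw [List.append_assoc, List.take_left]
  · have : a.length + τ = (a ++ v).length := by simp [hvlen]
    rw [this, List.drop_left]
  · -- the estimate
    obtain ⟨y, hy, hagr⟩ := hg
    have hlen : (a ++ v ++ b).length = a.length + τ + b.length := by simp [hvlen]; omega
    have hbig : birkhoff φ (a.length + τ + b.length) y =
        birkhoff φ a.length y + birkhoff φ τ (shift^[a.length] y)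
          + birkhoff φ b.length (shift^[a.length + τ] y) := by
      rw [birkhoff_add φ (a.length + τ) b.length y, birkhoff_add φ a.length τ y]
    have h1 : phiSup S φ a ≤ birkhoff φ a.length y + V := by
      apply phiSup_le hV hy
      exact agr_of_prefix ((List.prefix_append a v).trans (List.prefix_append (a ++ v) b)) hagr
    have h2 : phiSup S φ b ≤ birkhoff φ b.length (shift^[a.length + τ] y) + V := by
      apply phiSup_le hV (shift_iter_mem hS hy _)
      have := agr_drop hagr (a.length + τ)
      have hdrop : (a ++ v ++ b).drop (a.length + τ) = b := by
        have : a.length + τ = (a ++ v).length := by simp [hvlen]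
        rw [this, List.drop_left]
      rwa [hdrop] at this
    have h3 : -(τ * C) ≤ birkhoff φ τ (shift^[a.length] y) :=
      (abs_le.1 (birkhoff_abs_le hS hC (shift_iter_mem hS hy _) τ)).1
    have h4 : birkhoff φ (a ++ v ++ b).length y ≤ phiSup S φ (a ++ v ++ b) :=
      le_phiSup hS hC hy hagr
    rw [hlen, hbig] at h4
    linarith

end Glue

end Subshift
namespace Subshift

section LamFacts

variable {p : ℕ} {S : Set (ℕ → ℕ)} {φ : (ℕ → ℕ) → ℝ} {C V : ℝ} {τ : ℕ}

lemma Wn_nonempty (hS : IsSubshift p S) (n : ℕ) : (Wn S n).Nonempty := by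
  obtain ⟨y, hy⟩ := hS.1
  exact ⟨pref y n, (mem_Wn hS).2 ⟨pref_mem_lang hy n, by simp⟩⟩

lemma LamF_pos (hS : IsSubshift p S) (n : ℕ) : 0 < LamF S φ n := by
  apply Finset.sum_pos (fun w _ => Real.exp_pos _) (Wn_nonempty hS n)

lemma LamF_nonneg (hS : IsSubshift p S) (n : ℕ) : 0 ≤ LamF S φ n := (LamF_pos hS n).le

lemma Wn_zero (hS : IsSubshift p S) : Wn S 0 = {([] : List ℕ)} := by
  ext w
  rw [mem_Wn hS]
  simp only [Finset.mem_singleton, List.length_eq_zero_iff]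
  constructor
  · rintro ⟨_, rfl⟩; rfl
  · rintro rfl
    obtain ⟨y, hy⟩ := hS.1
    exact ⟨⟨y, hy, fun i => i.elim0⟩, rfl⟩

lemma LamF_zero (hS : IsSubshift p S) : LamF S φ (0 : ℕ) = 1 := by
  rw [LamF, Wn_zero hS, Finset.sum_singleton, phiSup_nil hS, Real.exp_zero]

lemma LamF_submult (hS : IsSubshift p S) (hC : ∀ z ∈ S, |φ z| ≤ C) (n l : ℕ) :
    LamF S φ (n + l) ≤ LamF S φ n * LamF S φ l := by
  classical
  have key : ∀ w ∈ Wn S (n + l),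
      Real.exp (phiSup S φ w) ≤
        Real.exp (phiSup S φ (w.take n)) * Real.exp (phiSup S φ (w.drop n)) := by
    intro w hw
    obtain ⟨hwl, hwlen⟩ := (mem_Wn hS).1 hw
    rw [← Real.exp_add, Real.exp_le_exp]
    have : w.take n ++ w.drop n = w := List.take_append_drop n w
    calc phiSup S φ w = phiSup S φ (w.take n ++ w.drop n) := by rw [this]
      _ ≤ _ := phiSup_append_le hS hC (by rw [this]; exact hwl)
  -- map into pairs
  set e : List ℕ → List ℕ × List ℕ := fun w => (w.take n, w.drop n) with he
  have hinj : ∀ w ∈ Wn S (n + l), ∀ w' ∈ Wn S (n + l), e w = e w' → w = w' := by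
    intro w _ w' _ h
    have h1 := congrArg Prod.fst h
    have h2 := congrArg Prod.snd h
    simp only [he] at h1 h2
    rw [← List.take_append_drop n w, ← List.take_append_drop n w', h1, h2]
  have himg : (Wn S (n + l)).image e ⊆ Wn S n ×ˢ Wn S l := by
    intro q hq
    obtain ⟨w, hw, rfl⟩ := Finset.mem_image.1 hq
    obtain ⟨hwl, hwlen⟩ := (mem_Wn hS).1 hw
    rw [Finset.mem_product]
    constructor
    · exact (mem_Wn hS).2 ⟨prefix_mem_lang (List.take_prefix n w) hwl, by simp [he, hwlen]⟩
    · exact (mem_Wn hS).2 ⟨drop_mem_lang hS hwl n, by simp [he, hwlen]⟩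
  calc LamF S φ (n + l)
      ≤ ∑ w ∈ Wn S (n + l),
          Real.exp (phiSup S φ (w.take n)) * Real.exp (phiSup S φ (w.drop n)) :=
        Finset.sum_le_sum key
    _ = ∑ q ∈ (Wn S (n + l)).image e,
          Real.exp (phiSup S φ q.1) * Real.exp (phiSup S φ q.2) := by
        rw [Finset.sum_image hinj]
    _ ≤ ∑ q ∈ Wn S n ×ˢ Wn S l,
          Real.exp (phiSup S φ q.1) * Real.exp (phiSup S φ q.2) := by
        apply Finset.sum_le_sum_of_subset_of_nonneg himg
        intro q _ _
        positivity
    _ = LamF S φ n * LamF S φ l := by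
        rw [Finset.sum_product, LamF, LamF, Finset.sum_mul]
        exact Finset.sum_congr rfl fun a _ => by rw [Finset.mul_sum]

end LamFacts

end Subshift
namespace Subshift

section Supermult

variable {p : ℕ} {S : Set (ℕ → ℕ)} {φ : (ℕ → ℕ) → ℝ} {C V : ℝ} {τ : ℕ}

lemma LamF_supermult (hS : IsSubshift p S) (hC : ∀ z ∈ S, |φ z| ≤ C)
    (hV : ∀ n : ℕ, ∀ a ∈ S, ∀ b ∈ S, (∀ i < n, a i = b i) → |birkhoff φ n a - birkhoff φ n b| ≤ V)
    (hsp : ∀ a ∈ lang S, ∀ b ∈ lang S, ∃ v : List ℕ, v.length = τ ∧ a ++ v ++ b ∈ lang S)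
    (n l : ℕ) :
    Real.exp (-(2 * V + τ * C)) * (LamF S φ n * LamF S φ l) ≤ LamF S φ (n + τ + l) := by
  classical
  have H : ∀ q : {q : List ℕ × List ℕ // q ∈ Wn S n ×ˢ Wn S l},
      ∃ g : List ℕ, g ∈ lang S ∧ g.length = n + τ + l ∧
        g.take n = q.1.1 ∧ g.drop (n + τ) = q.1.2 ∧
        phiSup S φ q.1.1 + phiSup S φ q.1.2 - (2 * V + τ * C) ≤ phiSup S φ g := by
    rintro ⟨⟨a, b⟩, hq⟩
    rw [Finset.mem_product] at hq
    obtain ⟨hal, halen⟩ := (mem_Wn hS).1 hq.1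
    obtain ⟨hbl, hblen⟩ := (mem_Wn hS).1 hq.2
    obtain ⟨g, hg, hlen, htake, hdrop, hest⟩ := glue_est hS hC hV hsp hal hbl
    rw [halen] at htake hdrop hlen
    rw [hblen] at hlen
    exact ⟨g, hg, hlen, htake, hdrop, hest⟩
  choose G hg1 hg2 hg3 hg4 hg5 using H
  have hAB : LamF S φ n * LamF S φ l =
      ∑ q ∈ Wn S n ×ˢ Wn S l, Real.exp (phiSup S φ q.1) * Real.exp (phiSup S φ q.2) := by
    rw [Finset.sum_product, LamF, LamF, Finset.sum_mul]
    exact Finset.sum_congr rfl fun a _ => by rw [Finset.mul_sum]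
  have hinj : ∀ q ∈ (Wn S n ×ˢ Wn S l).attach, ∀ q' ∈ (Wn S n ×ˢ Wn S l).attach,
      G q = G q' → q = q' := by
    intro q _ q' _ h
    have e1 : q.1.1 = q'.1.1 := by rw [← hg3 q, ← hg3 q', h]
    have e2 : q.1.2 = q'.1.2 := by rw [← hg4 q, ← hg4 q', h]
    exact Subtype.ext (Prod.ext e1 e2)
  have himg : (Wn S n ×ˢ Wn S l).attach.image G ⊆ Wn S (n + τ + l) := by
    intro w hw
    obtain ⟨q, _, rfl⟩ := Finset.mem_image.1 hw
    exact (mem_Wn hS).2 ⟨hg1 q, hg2 q⟩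
  calc Real.exp (-(2 * V + τ * C)) * (LamF S φ n * LamF S φ l)
      = ∑ q ∈ Wn S n ×ˢ Wn S l,
          Real.exp (phiSup S φ q.1 + phiSup S φ q.2 - (2 * V + τ * C)) := by
        rw [hAB, Finset.mul_sum]
        refine Finset.sum_congr rfl fun q _ => ?_
        rw [← Real.exp_add, ← Real.exp_add]
        ring_nf
    _ = ∑ q ∈ (Wn S n ×ˢ Wn S l).attach,
          Real.exp (phiSup S φ q.1.1 + phiSup S φ q.1.2 - (2 * V + τ * C)) :=
        (Finset.sum_attach _ _).symm
    _ ≤ ∑ q ∈ (Wn S n ×ˢ Wn S l).attach, Real.exp (phiSup S φ (G q)) :=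
        Finset.sum_le_sum fun q _ => Real.exp_le_exp.2 (hg5 q)
    _ = ∑ w ∈ (Wn S n ×ˢ Wn S l).attach.image G, Real.exp (phiSup S φ w) := by
        rw [Finset.sum_image hinj]
    _ ≤ LamF S φ (n + τ + l) := by
        apply Finset.sum_le_sum_of_subset_of_nonneg himg
        intro w _ _
        positivity

end Supermult

end Subshift
namespace Subshift

section Fekete

open Filter

variable {p : ℕ} {S : Set (ℕ → ℕ)} {φ : (ℕ → ℕ) → ℝ} {C V : ℝ} {τ : ℕ}

lemma pressure_facts (hS : IsSubshift p S) (hC : ∀ z ∈ S, |φ z| ≤ C) (hC0 : 0 ≤ C)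
    (hV0 : 0 < V)
    (hV : ∀ n : ℕ, ∀ a ∈ S, ∀ b ∈ S, (∀ i < n, a i = b i) → |birkhoff φ n a - birkhoff φ n b| ≤ V)
    (hτ : 1 ≤ τ)
    (hsp : ∀ a ∈ lang S, ∀ b ∈ lang S, ∃ v : List ℕ, v.length = τ ∧ a ++ v ++ b ∈ lang S) :
    ∃ P : ℝ, Filter.Tendsto (fun n : ℕ => Real.log (LamF S φ n) / n) Filter.atTop (nhds P) ∧
      (∀ n : ℕ, Real.exp (n * P) ≤ LamF S φ n) ∧
      (∀ n : ℕ, LamF S φ n ≤ Real.exp (n * P + (τ * |P| + (2 * V + τ * C)))) := by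
  set u : ℕ → ℝ := fun n => Real.log (LamF S φ n) with hu
  have upos : ∀ n, 0 < LamF S φ n := fun n => LamF_pos hS n
  have usub : Subadditive u := by
    intro m n
    have h1 : LamF S φ (m + n) ≤ LamF S φ m * LamF S φ n := LamF_submult hS hC m n
    have := Real.log_le_log (upos (m + n)) h1
    rwa [Real.log_mul (upos m).ne' (upos n).ne'] at this
  have u_lower : ∀ n : ℕ, -(n * C) ≤ u n := by
    intro n
    obtain ⟨y, hy⟩ := hS.1
    have hmem : pref y n ∈ Wn S n := (mem_Wn hS).2 ⟨pref_mem_lang hy n, by simp⟩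
    have h1 : Real.exp (-(n * C)) ≤ LamF S φ n := by
      calc Real.exp (-(n * C)) ≤ Real.exp (phiSup S φ (pref y n)) := by
            apply Real.exp_le_exp.2
            have := neg_le_phiSup hS hC (pref_mem_lang hy n)
            simpa using this
        _ ≤ LamF S φ n :=
            Finset.single_le_sum (fun w _ => (Real.exp_pos _).le) hmem
    rwa [← Real.le_log_iff_exp_le (upos n)] at h1
  have hbdd : BddBelow (Set.range fun n : ℕ => u n / n) := by
    refine ⟨-C, ?_⟩
    rintro _ ⟨n, rfl⟩
    rcases Nat.eq_zero_or_pos n with rfl | hn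
    · simp [hu, LamF_zero hS]; linarith
    · show -C ≤ u n / (n : ℝ)
      rw [le_div_iff₀ (by positivity : (0:ℝ) < (n:ℝ))]
      calc -C * n = -(n * C) := by ring
        _ ≤ u n := u_lower n
  set P := usub.lim with hP
  have htend : Filter.Tendsto (fun n : ℕ => u n / n) Filter.atTop (nhds P) :=
    usub.tendsto_lim hbdd
  refine ⟨P, htend, ?_, ?_⟩
  · -- lower bound for LamF
    intro n
    rcases Nat.eq_zero_or_pos n with rfl | hn
    · simp [LamF_zero hS]
    · have h1 : P ≤ u n / n := usub.lim_le_div hbdd (by omega)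
      have h2 : (n : ℝ) * P ≤ u n := by
        rw [le_div_iff₀ (by positivity : (0:ℝ) < (n:ℝ))] at h1
        linarith [h1]
      calc Real.exp (n * P) ≤ Real.exp (u n) := Real.exp_le_exp.2 h2
        _ = LamF S φ n := Real.exp_log (upos n)
  · -- upper bound for LamF
    intro n
    set R := 2 * V + τ * C with hR
    have hR0 : 0 ≤ R := by positivity
    rcases Nat.eq_zero_or_pos n with rfl | hn
    · rw [hu] at *
      simp only [Nat.cast_zero, zero_mul, zero_add]
      rw [LamF_zero hS]
      rw [show (1 : ℝ) = Real.exp 0 by simp]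
      apply Real.exp_le_exp.2
      positivity
    · -- main case
      set N : ℕ → ℕ := fun k => n + k * (n + τ) with hN
      have iter : ∀ k : ℕ, u n + k * (u n - R) ≤ u (N k) := by
        intro k
        induction k with
        | zero => simp [hN]
        | succ k ih =>
          have hsup := LamF_supermult hS hC hV hsp (N k) n
          have hlog : u (N k) + u n - R ≤ u (N k + τ + n) := by
            have hlhs : 0 < Real.exp (-(2 * V + ↑τ * C)) * (LamF S φ (N k) * LamF S φ n) :=
              mul_pos (Real.exp_pos _) (mul_pos (upos _) (upos _))
            have := Real.log_le_log hlhs hsup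
            rw [Real.log_mul (Real.exp_pos _).ne' (mul_pos (upos _) (upos _)).ne',
              Real.log_exp, Real.log_mul (upos _).ne' (upos _).ne'] at this
            rw [hR]
            linarith
          have hidx : N k + τ + n = N (k + 1) := by rw [hN]; ring
          rw [hidx] at hlog
          push_cast
          linarith
      set t := (u n - R) / (n + τ) with ht
      have htP : t ≤ P := by
        have hNpos : ∀ k : ℕ, (0 : ℝ) < N k := by
          intro k
          have h9 : 1 ≤ N k := by
            show 1 ≤ n + k * (n + τ)
            omega
          exact_mod_cast Nat.lt_of_lt_of_le Nat.zero_lt_one h9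
        have hNtend : Filter.Tendsto N Filter.atTop Filter.atTop := by
          apply Filter.tendsto_atTop_mono (fun k => ?_) Filter.tendsto_id
          simp only [hN, id]
          calc k = k * 1 := (mul_one k).symm
            _ ≤ k * (n + τ) := Nat.mul_le_mul_left k (by omega)
            _ ≤ n + k * (n + τ) := Nat.le_add_left _ n
        have h2 : Filter.Tendsto (fun k => u (N k) / (N k : ℝ)) Filter.atTop (nhds P) :=
          htend.comp hNtend
        have h3 : Filter.Tendsto (fun k => t + (u n - n * t) / (N k : ℝ)) Filter.atTop
            (nhds (t + 0)) := by
          apply Filter.Tendsto.add tendsto_const_nhds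
          exact Filter.Tendsto.div_atTop tendsto_const_nhds
            (Filter.Tendsto.comp tendsto_natCast_atTop_atTop hNtend)
        rw [add_zero] at h3
        refine le_of_tendsto_of_tendsto' h3 h2 (fun k => ?_)
        have hNk : (N k : ℝ) = n + k * (n + τ) := by rw [hN]; push_cast; ring
        have key : (N k : ℝ) * t + (u n - n * t) ≤ u (N k) := by
          have := iter k
          have hnt : (0:ℝ) < (n : ℝ) + τ := by positivity
          have hexp : (N k : ℝ) * t + (u n - n * t) = u n + k * (u n - R) := by
            rw [hNk, ht]
            field_simp
            ring
          rw [hexp]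
          exact this
        have heq : t + (u n - n * t) / (N k : ℝ) = ((N k : ℝ) * t + (u n - n * t)) / N k := by
          rw [add_div, mul_div_cancel_left₀ _ (hNpos k).ne']
        rw [heq]
        exact by gcongr

      -- conclude
      have h4 : u n ≤ n * P + (τ * |P| + R) := by
        have h5 : u n - R ≤ (n + τ) * P := by
          rw [ht] at htP
          rw [div_le_iff₀ (by positivity : (0:ℝ) < (n:ℝ) + τ)] at htP
          linarith
        have h6 : ((n : ℝ) + τ) * P ≤ n * P + τ * |P| := by
          have : (τ : ℝ) * P ≤ τ * |P| := by
            apply mul_le_mul_of_nonneg_left (le_abs_self P) (by positivity)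
          linarith [this]
        linarith
      calc LamF S φ n = Real.exp (u n) := (Real.exp_log (upos n)).symm
        _ ≤ _ := Real.exp_le_exp.2 (by rw [hR] at h4; exact h4)

end Fekete

end Subshift
namespace Subshift

section Num

variable {p : ℕ} {S : Set (ℕ → ℕ)} {φ : (ℕ → ℕ) → ℝ} {C V : ℝ} {τ : ℕ}

open Finset

/-- total weight of words of length `l` extending `w` -/
def Num (S : Set (ℕ → ℕ)) (φ : (ℕ → ℕ) → ℝ) (l : ℕ) (w : List ℕ) : ℝ :=
  ∑ ω ∈ (Wn S l).filter (fun ω => w <+: ω), Real.exp (phiSup S φ ω)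

lemma Num_nonneg (l : ℕ) (w : List ℕ) : 0 ≤ Num S φ l w :=
  Finset.sum_nonneg fun ω _ => (Real.exp_pos _).le

lemma Num_le_LamF (l : ℕ) (w : List ℕ) : Num S φ l w ≤ LamF S φ l :=
  Finset.sum_le_sum_of_subset_of_nonneg (Finset.filter_subset _ _)
    (fun ω _ _ => (Real.exp_pos _).le)

lemma Num_nil (l : ℕ) : Num S φ l [] = LamF S φ l := by
  rw [Num, Finset.filter_true_of_mem fun ω _ => List.nil_prefix]
  rfl

lemma Num_anti (l : ℕ) {w w' : List ℕ} (h : w <+: w') : Num S φ l w' ≤ Num S φ l w := by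
  apply Finset.sum_le_sum_of_subset_of_nonneg
  · intro ω hω
    rw [Finset.mem_filter] at hω ⊢
    exact ⟨hω.1, h.trans hω.2⟩
  · exact fun ω _ _ => (Real.exp_pos _).le

lemma Num_upper (hS : IsSubshift p S) (hC : ∀ z ∈ S, |φ z| ≤ C)
    {l : ℕ} {w : List ℕ} (hlen : w.length ≤ l) :
    Num S φ l w ≤ Real.exp (phiSup S φ w) * LamF S φ (l - w.length) := by
  classical
  set A := (Wn S l).filter (fun ω => w <+: ω) with hA
  have key : ∀ ω ∈ A, Real.exp (phiSup S φ ω) ≤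
      Real.exp (phiSup S φ w) * Real.exp (phiSup S φ (ω.drop w.length)) := by
    intro ω hω
    rw [hA, Finset.mem_filter] at hω
    obtain ⟨hωmem, hp⟩ := hω
    obtain ⟨hωl, hωlen⟩ := (mem_Wn hS).1 hωmem
    obtain ⟨t, ht⟩ := hp
    rw [← Real.exp_add, Real.exp_le_exp]
    have hdrop : ω.drop w.length = t := by rw [← ht, List.drop_left]
    calc phiSup S φ ω = phiSup S φ (w ++ t) := by rw [ht]
      _ ≤ phiSup S φ w + phiSup S φ t := phiSup_append_le hS hC (by rw [ht]; exact hωl)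
      _ = phiSup S φ w + phiSup S φ (ω.drop w.length) := by rw [hdrop]
  have hinj : ∀ ω ∈ A, ∀ ω' ∈ A, ω.drop w.length = ω'.drop w.length → ω = ω' := by
    intro ω hω ω' hω' h
    rw [hA, Finset.mem_filter] at hω hω'
    obtain ⟨t, ht⟩ := hω.2
    obtain ⟨t', ht'⟩ := hω'.2
    have e1 : ω.drop w.length = t := by rw [← ht, List.drop_left]
    have e2 : ω'.drop w.length = t' := by rw [← ht', List.drop_left]
    rw [← ht, ← ht', ← e1, ← e2, h]
  have himg : A.image (fun ω => ω.drop w.length) ⊆ Wn S (l - w.length) := by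
    intro t ht
    obtain ⟨ω, hω, rfl⟩ := Finset.mem_image.1 ht
    rw [hA, Finset.mem_filter] at hω
    obtain ⟨hωl, hωlen⟩ := (mem_Wn hS).1 hω.1
    exact (mem_Wn hS).2 ⟨drop_mem_lang hS hωl _, by simp [hωlen]⟩
  calc Num S φ l w ≤ ∑ ω ∈ A, Real.exp (phiSup S φ w) * Real.exp (phiSup S φ (ω.drop w.length)) :=
        Finset.sum_le_sum key
    _ = ∑ t ∈ A.image (fun ω => ω.drop w.length),
          Real.exp (phiSup S φ w) * Real.exp (phiSup S φ t) := by rw [Finset.sum_image hinj]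
    _ ≤ ∑ t ∈ Wn S (l - w.length), Real.exp (phiSup S φ w) * Real.exp (phiSup S φ t) := by
        apply Finset.sum_le_sum_of_subset_of_nonneg himg
        intro t _ _; positivity
    _ = Real.exp (phiSup S φ w) * LamF S φ (l - w.length) := by
        rw [LamF, Finset.mul_sum]

lemma Num_lower (hS : IsSubshift p S) (hC : ∀ z ∈ S, |φ z| ≤ C)
    (hV : ∀ n : ℕ, ∀ a ∈ S, ∀ b ∈ S, (∀ i < n, a i = b i) → |birkhoff φ n a - birkhoff φ n b| ≤ V)
    (hsp : ∀ a ∈ lang S, ∀ b ∈ lang S, ∃ v : List ℕ, v.length = τ ∧ a ++ v ++ b ∈ lang S)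
    {l : ℕ} {w : List ℕ} (hw : w ∈ lang S) (hlen : w.length + τ ≤ l) :
    Real.exp (phiSup S φ w - (2 * V + τ * C)) * LamF S φ (l - w.length - τ) ≤ Num S φ l w := by
  classical
  set r := l - w.length - τ with hr
  have H : ∀ b : {b : List ℕ // b ∈ Wn S r},
      ∃ g : List ℕ, g ∈ lang S ∧ g.length = l ∧ w <+: g ∧ g.drop (w.length + τ) = b.1 ∧
        phiSup S φ w + phiSup S φ b.1 - (2 * V + τ * C) ≤ phiSup S φ g := by
    rintro ⟨b, hb⟩
    obtain ⟨hbl, hblen⟩ := (mem_Wn hS).1 hb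
    obtain ⟨g, hg, hglen, htake, hdrop, hest⟩ := glue_est hS hC hV hsp hw hbl
    refine ⟨g, hg, ?_, ?_, hdrop, hest⟩
    · rw [hglen, hblen, hr]; omega
    · rw [List.prefix_iff_eq_take]; exact htake.symm
  choose G hg1 hg2 hg3 hg4 hg5 using H
  have hinj : ∀ b ∈ (Wn S r).attach, ∀ b' ∈ (Wn S r).attach, G b = G b' → b = b' := by
    intro b _ b' _ h
    have : b.1 = b'.1 := by rw [← hg4 b, ← hg4 b', h]
    exact Subtype.ext this
  have himg : (Wn S r).attach.image G ⊆ (Wn S l).filter (fun ω => w <+: ω) := by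
    intro g hg
    obtain ⟨b, _, rfl⟩ := Finset.mem_image.1 hg
    rw [Finset.mem_filter]
    exact ⟨(mem_Wn hS).2 ⟨hg1 b, hg2 b⟩, hg3 b⟩
  calc Real.exp (phiSup S φ w - (2 * V + τ * C)) * LamF S φ r
      = ∑ b ∈ Wn S r, Real.exp (phiSup S φ w - (2 * V + τ * C)) * Real.exp (phiSup S φ b) := by
        rw [LamF, Finset.mul_sum]
    _ = ∑ b ∈ (Wn S r).attach,
          Real.exp (phiSup S φ w - (2 * V + τ * C)) * Real.exp (phiSup S φ b.1) :=
        (Finset.sum_attach _ _).symm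
    _ ≤ ∑ b ∈ (Wn S r).attach, Real.exp (phiSup S φ (G b)) := by
        apply Finset.sum_le_sum
        intro b _
        rw [← Real.exp_add]
        exact Real.exp_le_exp.2 (by linarith [hg5 b])
    _ = ∑ g ∈ (Wn S r).attach.image G, Real.exp (phiSup S φ g) := by
        rw [Finset.sum_image hinj]
    _ ≤ Num S φ l w := by
        apply Finset.sum_le_sum_of_subset_of_nonneg himg
        intro g _ _; positivity

lemma Num_split (hS : IsSubshift p S) {l : ℕ} {w w₁ w₂ : List ℕ}
    (h1 : w <+: w₁) (h2 : w <+: w₂) (hlen : w₁.length = w₂.length) (hne : w₁ ≠ w₂) :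
    Num S φ l w₁ + Num S φ l w₂ ≤ Num S φ l w := by
  classical
  set A1 := (Wn S l).filter (fun ω => w₁ <+: ω) with hA1
  set A2 := (Wn S l).filter (fun ω => w₂ <+: ω) with hA2
  have hdisj : Disjoint A1 A2 := by
    rw [Finset.disjoint_left]
    intro ω hω1 hω2
    rw [hA1, Finset.mem_filter] at hω1
    rw [hA2, Finset.mem_filter] at hω2
    rcases (List.prefix_or_prefix_of_prefix hω1.2 hω2.2) with h | h
    · exact hne (h.eq_of_length hlen)
    · exact hne ((h.eq_of_length hlen.symm)).symm
  have hsub : A1 ∪ A2 ⊆ (Wn S l).filter (fun ω => w <+: ω) := by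
    intro ω hω
    rcases Finset.mem_union.1 hω with h | h
    · rw [hA1, Finset.mem_filter] at h
      rw [Finset.mem_filter]
      exact ⟨h.1, h1.trans h.2⟩
    · rw [hA2, Finset.mem_filter] at h
      rw [Finset.mem_filter]
      exact ⟨h.1, h2.trans h.2⟩
  calc Num S φ l w₁ + Num S φ l w₂
      = ∑ ω ∈ A1 ∪ A2, Real.exp (phiSup S φ ω) := (Finset.sum_union hdisj).symm
    _ ≤ Num S φ l w := Finset.sum_le_sum_of_subset_of_nonneg hsub
        fun ω _ _ => (Real.exp_pos _).le

end Num

end Subshift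
namespace Subshift

section Decay

variable {p : ℕ} {S : Set (ℕ → ℕ)} {φ : (ℕ → ℕ) → ℝ} {C V : ℝ} {τ : ℕ}

lemma pref_zero (x : ℕ → ℕ) : pref x 0 = [] := by simp [pref]

lemma phiSup_pref_bound (hS : IsSubshift p S) (hC : ∀ z ∈ S, |φ z| ≤ C) (hC0 : 0 ≤ C)
    (hV0 : 0 < V)
    (hV : ∀ n : ℕ, ∀ a ∈ S, ∀ b ∈ S, (∀ i < n, a i = b i) → |birkhoff φ n a - birkhoff φ n b| ≤ V)
    (hτ : 1 ≤ τ)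
    (hsp : ∀ a ∈ lang S, ∀ b ∈ lang S, ∃ v : List ℕ, v.length = τ ∧ a ++ v ++ b ∈ lang S)
    {x : ℕ → ℕ} (hx : x ∈ S) {u₀ u₁ : List ℕ}
    (hu₀ : u₀ ∈ lang S) (hu₁ : u₁ ∈ lang S) (hne : u₀ ≠ u₁)
    (hlen01 : u₀.length = u₁.length)
    (P Q : ℝ) (hQ0 : 0 ≤ Q)
    (hPlow : ∀ k : ℕ, Real.exp (k * P) ≤ LamF S φ k)
    (hPhigh : ∀ k : ℕ, LamF S φ k ≤ Real.exp (k * P + Q)) :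
    ∃ γ > (0:ℝ), ∃ B : ℝ, ∀ n : ℕ, phiSup S φ (pref x n) ≤ n * (P - γ) + B := by
  classical
  set m := u₀.length with hm
  set R : ℝ := 2 * V + τ * C with hR
  have hR0 : 0 ≤ R := by positivity
  set c : ℕ := τ + m with hc
  have hc1 : 1 ≤ c := by omega
  set ρ₀ : ℝ := Real.exp (-(m * C + 2 * R + Q + ((c : ℝ) + τ) * |P|)) with hρ₀
  have hρ₀pos : 0 < ρ₀ := Real.exp_pos _
  set ρ : ℝ := min ρ₀ 2⁻¹ with hρ
  have hρpos : 0 < ρ := lt_min hρ₀pos (by norm_num)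
  have hρle : ρ ≤ 2⁻¹ := min_le_right _ _
  have hρ1 : ρ < 1 := lt_of_le_of_lt hρle (by norm_num)
  -- the one-step decay
  have hstep : ∀ l j : ℕ, j + c + τ ≤ l →
      Num S φ l (pref x (j + c)) ≤ (1 - ρ) * Num S φ l (pref x j) := by
    intro l j hjl
    -- glue the prefix with u₀ and u₁
    obtain ⟨g₀, hg₀l, hg₀len, hg₀take, hg₀drop, hg₀est⟩ :=
      glue_est hS hC hV hsp (pref_mem_lang hx j) hu₀
    obtain ⟨g₁, hg₁l, hg₁len, hg₁take, hg₁drop, hg₁est⟩ :=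
      glue_est hS hC hV hsp (pref_mem_lang hx j) hu₁
    rw [pref_length] at hg₀len hg₁len hg₀take hg₁take hg₀drop hg₁drop
    have hg01 : g₀ ≠ g₁ := by
      intro h
      apply hne
      rw [← hg₀drop, ← hg₁drop, h]
    -- pick the glued word that differs from the actual prefix
    have hpick : ∃ g, g ∈ lang S ∧ g.length = j + c ∧ pref x j <+: g ∧
        phiSup S φ (pref x j) - (m * C) - R ≤ phiSup S φ g ∧ g ≠ pref x (j + c) := by
      have est₀ : phiSup S φ (pref x j) - (m * C) - R ≤ phiSup S φ g₀ := by
        have h1 := neg_le_phiSup hS hC hu₀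
        rw [← hm] at h1
        rw [hR]
        linarith [hg₀est]
      have est₁ : phiSup S φ (pref x j) - (m * C) - R ≤ phiSup S φ g₁ := by
        have h1 := neg_le_phiSup hS hC hu₁
        rw [← hlen01] at h1
        rw [hR]
        linarith [hg₁est]
      have len₀ : g₀.length = j + c := by rw [hg₀len]; omega
      have len₁ : g₁.length = j + c := by rw [hg₁len]; omega
      have pre₀ : pref x j <+: g₀ :=
        List.prefix_iff_eq_take.2 (by rw [pref_length]; exact hg₀take.symm)
      have pre₁ : pref x j <+: g₁ :=
        List.prefix_iff_eq_take.2 (by rw [pref_length]; exact hg₁take.symm)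
      by_cases hcase : g₀ = pref x (j + c)
      · exact ⟨g₁, hg₁l, len₁, pre₁, est₁, fun h => hg01 (hcase.trans h.symm)⟩
      · exact ⟨g₀, hg₀l, len₀, pre₀, est₀, hcase⟩
    obtain ⟨g, hgl, hglen, hgpre, hgest, hgne⟩ := hpick
    -- split the cylinder over the two distinct extensions
    have hsplit : Num S φ l (pref x (j + c)) + Num S φ l g ≤ Num S φ l (pref x j) :=
      Num_split hS (pref_prefix x (by omega)) hgpre
        (by rw [pref_length, hglen]) (fun h => hgne h.symm)
    -- lower bound for Num of g
    have hnum_g : ρ₀ * Num S φ l (pref x j) ≤ Num S φ l g := by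
      have hlow := Num_lower hS hC hV hsp hgl (by omega : g.length + τ ≤ l)
      have hlow2 : Real.exp (phiSup S φ g - R) *
          Real.exp (((l - (j + c) - τ : ℕ) : ℝ) * P) ≤ Num S φ l g := by
        refine le_trans ?_ hlow
        rw [hglen, hR]
        exact mul_le_mul_of_nonneg_left (hPlow _) (Real.exp_pos _).le
      have hup := Num_upper hS hC (show (pref x j).length ≤ l by rw [pref_length]; omega)
      have hup2 : Num S φ l (pref x j) ≤
          Real.exp (phiSup S φ (pref x j) + (((l - j : ℕ) : ℝ) * P + Q)) := by
        refine le_trans hup ?_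
        rw [Real.exp_add, pref_length]
        exact mul_le_mul_of_nonneg_left (hPhigh _) (Real.exp_pos _).le
      have hcast1 : ((l - (j + c) - τ : ℕ) : ℝ) = (l : ℝ) - j - c - τ := by
        rw [Nat.cast_sub (by omega), Nat.cast_sub (by omega)]
        push_cast
        ring
      have hcast2 : ((l - j : ℕ) : ℝ) = (l : ℝ) - j := by
        rw [Nat.cast_sub (by omega)]
      have habs : ((c : ℝ) + τ) * P ≤ ((c : ℝ) + τ) * |P| :=
        mul_le_mul_of_nonneg_left (le_abs_self P) (by positivity)
      calc ρ₀ * Num S φ l (pref x j)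
          ≤ ρ₀ * Real.exp (phiSup S φ (pref x j) + (((l - j : ℕ) : ℝ) * P + Q)) :=
            mul_le_mul_of_nonneg_left hup2 hρ₀pos.le
        _ = Real.exp (-(m * C + 2 * R + Q + ((c : ℝ) + τ) * |P|) +
              (phiSup S φ (pref x j) + (((l - j : ℕ) : ℝ) * P + Q))) := by
            rw [hρ₀, ← Real.exp_add]
        _ ≤ Real.exp (phiSup S φ g - R + ((l - (j + c) - τ : ℕ) : ℝ) * P) := by
            apply Real.exp_le_exp.2
            rw [hcast1, hcast2]
            have hPexp : ((l:ℝ) - j - c - τ) * P = ((l:ℝ) - j) * P - ((c:ℝ) + τ) * P := by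
              ring
            linarith [hgest, habs, hPexp]
        _ = Real.exp (phiSup S φ g - R) * Real.exp (((l - (j + c) - τ : ℕ) : ℝ) * P) :=
            Real.exp_add _ _
        _ ≤ Num S φ l g := hlow2
    -- combine
    have hρρ₀ : ρ * Num S φ l (pref x j) ≤ ρ₀ * Num S φ l (pref x j) :=
      mul_le_mul_of_nonneg_right (min_le_left _ _) (Num_nonneg _ _)
    have hexpand : (1 - ρ) * Num S φ l (pref x j) =
        Num S φ l (pref x j) - ρ * Num S φ l (pref x j) := by ring
    rw [hexpand]
    linarith [hsplit, hnum_g, hρρ₀]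
  -- iterate the decay
  have hchain : ∀ n k : ℕ, k * c ≤ n →
      Num S φ (n + τ) (pref x (k * c)) ≤ (1 - ρ) ^ k * LamF S φ (n + τ) := by
    intro n k
    induction k with
    | zero => intro _; simp [pref_zero, Num_nil]
    | succ k ih =>
      intro hkc
      have hkc' : k * c ≤ n := by
        calc k * c ≤ (k + 1) * c := Nat.mul_le_mul_right c (by omega)
          _ ≤ n := hkc
      have h1 : Num S φ (n + τ) (pref x (k * c + c)) ≤
          (1 - ρ) * Num S φ (n + τ) (pref x (k * c)) := by
        apply hstep
        have : (k + 1) * c = k * c + c := by ring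
        omega
      have h2 := ih hkc'
      have hidx : (k + 1) * c = k * c + c := by ring
      rw [hidx]
      calc Num S φ (n + τ) (pref x (k * c + c))
          ≤ (1 - ρ) * Num S φ (n + τ) (pref x (k * c)) := h1
        _ ≤ (1 - ρ) * ((1 - ρ) ^ k * LamF S φ (n + τ)) :=
            mul_le_mul_of_nonneg_left h2 (by linarith)
        _ = (1 - ρ) ^ (k + 1) * LamF S φ (n + τ) := by ring
  -- per-n bound
  set θ : ℝ := -Real.log (1 - ρ) with hθ
  have hθpos : 0 < θ := by
    rw [hθ, neg_pos]
    exact Real.log_neg (by linarith) (by linarith)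
  have hcpos : (0:ℝ) < (c:ℝ) := by
    have : 0 < c := by omega
    exact_mod_cast this
  refine ⟨θ / c, div_pos hθpos hcpos, τ * |P| + Q + R + θ, ?_⟩
  intro n
  set K : ℕ := n / c with hK
  have hKc : K * c ≤ n := by rw [hK]; exact Nat.div_mul_le_self n c
  -- lower bound on Num of the full prefix
  have hlow : Real.exp (phiSup S φ (pref x n) - R) ≤ Num S φ (n + τ) (pref x n) := by
    have := Num_lower hS hC hV hsp (pref_mem_lang hx n)
      (show (pref x n).length + τ ≤ n + τ by rw [pref_length])
    rw [pref_length] at this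
    have h0 : n + τ - n - τ = 0 := by omega
    rw [h0, LamF_zero hS, mul_one] at this
    rw [hR]
    exact this
  have hup : Num S φ (n + τ) (pref x n) ≤ (1 - ρ) ^ K * Real.exp ((n + τ : ℕ) * P + Q) := by
    calc Num S φ (n + τ) (pref x n)
        ≤ Num S φ (n + τ) (pref x (K * c)) := Num_anti _ (pref_prefix x hKc)
      _ ≤ (1 - ρ) ^ K * LamF S φ (n + τ) := hchain n K hKc
      _ ≤ (1 - ρ) ^ K * Real.exp ((n + τ : ℕ) * P + Q) :=
          mul_le_mul_of_nonneg_left (hPhigh _) (pow_nonneg (by linarith) K)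
  -- take logs
  have hpow_pos : (0:ℝ) < (1 - ρ) ^ K := pow_pos (by linarith) K
  have hlog : phiSup S φ (pref x n) - R ≤ K * Real.log (1 - ρ) + ((n + τ : ℕ) * P + Q) := by
    have h1 : Real.exp (phiSup S φ (pref x n) - R) ≤
        (1 - ρ) ^ K * Real.exp ((n + τ : ℕ) * P + Q) := le_trans hlow hup
    have h2 := Real.log_le_log (Real.exp_pos _) h1
    rw [Real.log_exp, Real.log_mul hpow_pos.ne' (Real.exp_pos _).ne', Real.log_pow,
      Real.log_exp] at h2
    exact h2
  -- finish with arithmetic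
  have hKge : ((n : ℝ) - c) / c ≤ K := by
    rw [div_le_iff₀ hcpos]
    have e : c * K + n % c = n := by rw [hK]; exact Nat.div_add_mod n c
    have hmod : n % c < c := Nat.mod_lt _ (by omega)
    have e' : ((c:ℝ)) * K + ((n % c : ℕ):ℝ) = (n:ℝ) := by exact_mod_cast e
    have hmod' : ((n % c : ℕ):ℝ) < (c:ℝ) := by exact_mod_cast hmod
    nlinarith
  have hKθ : θ * ((n : ℝ) - c) / c ≤ K * θ := by
    rw [mul_div_assoc]
    exact mul_le_mul_of_nonneg_left hKge hθpos.le |>.trans_eq (mul_comm _ _)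
  have hτP : ((n : ℝ) + τ) * P ≤ n * P + τ * |P| := by
    have : (τ : ℝ) * P ≤ τ * |P| := mul_le_mul_of_nonneg_left (le_abs_self P) (by positivity)
    nlinarith
  have hcast : ((n + τ : ℕ) : ℝ) = (n : ℝ) + τ := by push_cast; ring
  rw [hcast] at hlog
  have hlogρ : Real.log (1 - ρ) = -θ := by rw [hθ]; ring
  rw [hlogρ] at hlog
  -- phiSup ≤ n P + τ|P| + Q + R − K θ ≤ n (P − θ/c) + (τ|P| + Q + R + θ)
  have hfin : (n : ℝ) * (θ / c) ≤ K * θ + θ := by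
    have h5 : θ * ((n:ℝ) - c) / c = n * (θ/c) - θ := by
      field_simp
    linarith [hKθ, h5.symm.le, h5.le]
  have hexp1 : ((n:ℝ) + τ) * P = (n:ℝ) * P + (τ:ℝ) * P := by ring
  have hexp2 : (n:ℝ) * (P - θ/c) = (n:ℝ) * P - (n:ℝ) * (θ/c) := by ring
  have hτP2 : (τ:ℝ) * P ≤ (τ:ℝ) * |P| :=
    mul_le_mul_of_nonneg_left (le_abs_self P) (by positivity)
  have hKθ2 : (K:ℝ) * -θ = -((K:ℝ) * θ) := by ring
  rw [hKθ2] at hlog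
  have h6 : -((K:ℝ) * θ) ≤ θ - (n:ℝ) * (θ / c) := by linarith [hfin]
  have h7 : phiSup S φ (pref x n) ≤
      -((K:ℝ) * θ) + ((n:ℝ) * P + (τ:ℝ) * |P|) + Q + R := by linarith [hlog, hexp1, hτP2]
  calc phiSup S φ (pref x n) ≤ -((K:ℝ) * θ) + ((n:ℝ) * P + (τ:ℝ) * |P|) + Q + R := h7
    _ ≤ (θ - (n:ℝ) * (θ / c)) + ((n:ℝ) * P + (τ:ℝ) * |P|) + Q + R := by linarith [h6]
    _ = (n:ℝ) * (P - θ / c) + ((τ:ℝ) * |P| + Q + R + θ) := by ring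

end Decay

end Subshift
namespace Subshift

theorem pressure_initialSegs_lt_aux (p : ℕ) (S : Set (ℕ → ℕ)) (hS : IsSubshift p S)
    (htwo : ∃ x ∈ S, ∃ y ∈ S, x ≠ y) (hspec : HasSpec S)
    (φ : (ℕ → ℕ) → ℝ) (hcont : ContinuousOn φ S) (hφ : Bowen S φ)
    (x : ℕ → ℕ) (hx : x ∈ S) :
    pressure S φ (initialSegs x) < pressure S φ (lang S) := by
  classical
  -- compactness and boundedness of φ
  have hcomp : IsCompact S := by
    have hK : IsCompact (Set.pi Set.univ fun _ : ℕ => Set.Iic p) :=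
      isCompact_univ_pi fun _ => (Set.finite_Iic p).isCompact
    apply hK.of_isClosed_subset hS.2.1
    intro y hy
    rw [Set.mem_univ_pi]
    exact fun i => hS.2.2.2 y hy i
  obtain ⟨C, hCnorm⟩ := hcomp.exists_bound_of_continuousOn hcont
  have hC : ∀ z ∈ S, |φ z| ≤ C := by
    intro z hz
    have := hCnorm z hz
    rwa [Real.norm_eq_abs] at this
  have hC0 : 0 ≤ C := by
    obtain ⟨y, hy⟩ := hS.1
    exact le_trans (abs_nonneg _) (hC y hy)
  -- Bowen constant
  obtain ⟨V, hV0, hV⟩ := hφ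
  -- specification constant
  obtain ⟨τ, hτ, hsp⟩ := spec_pair hspec
  -- two distinct words of equal length
  obtain ⟨x₀, hx₀, y₀, hy₀, hxy⟩ := htwo
  have hd : ∃ d : ℕ, x₀ d ≠ y₀ d := by
    by_contra h
    push_neg at h
    exact hxy (funext h)
  obtain ⟨d, hd⟩ := hd
  set u₀ := pref x₀ (d + 1) with hu₀def
  set u₁ := pref y₀ (d + 1) with hu₁def
  have hu₀ : u₀ ∈ lang S := pref_mem_lang hx₀ _
  have hu₁ : u₁ ∈ lang S := pref_mem_lang hy₀ _
  have hne : u₀ ≠ u₁ := by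
    intro h
    apply hd
    have hl0 : d < u₀.length := by rw [hu₀def]; simp [pref]
    have hl1 : d < u₁.length := by rw [hu₁def]; simp [pref]
    have h2 : u₀.getD d 0 = u₁.getD d 0 := by rw [h]
    rw [List.getD_eq_getElem u₀ 0 hl0, List.getD_eq_getElem u₁ 0 hl1] at h2
    have e0 : u₀[d]'hl0 = x₀ d := by
      simp only [hu₀def, pref, List.getElem_ofFn]
    have e1 : u₁[d]'hl1 = y₀ d := by
      simp only [hu₁def, pref, List.getElem_ofFn]
    rw [e0, e1] at h2
    exact h2
  have hlen01 : u₀.length = u₁.length := by simp [hu₀def, hu₁def]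
  -- the pressure
  obtain ⟨P, htend, hPlow, hPhigh⟩ := pressure_facts hS hC hC0 hV0 hV hτ hsp
  set Q : ℝ := τ * |P| + (2 * V + τ * C) with hQdef
  have hQ0 : 0 ≤ Q := by
    have h1 : (0:ℝ) ≤ τ * |P| := mul_nonneg (by positivity) (abs_nonneg P)
    have h2 : (0:ℝ) ≤ 2 * V + τ * C := by positivity
    linarith
  -- the key decay bound
  obtain ⟨γ, hγ0, B, hB⟩ := phiSup_pref_bound hS hC hC0 hV0 hV hτ hsp hx hu₀ hu₁ hne
    hlen01 P Q hQ0 hPlow hPhigh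
  -- identify the right-hand side pressure
  have hRHS : pressure S φ (lang S) = P := by
    rw [pressure]
    have he : ∀ n : ℕ, Lam S φ (lang S) n = LamF S φ n := Lam_lang_eq hS
    simp only [he]
    exact htend.limsup_eq
  -- identify the left-hand side pressure
  have hLHS : pressure S φ (initialSegs x) =
      Filter.limsup (fun n : ℕ => phiSup S φ (pref x n) / n) Filter.atTop := by
    rw [pressure]
    have he : ∀ n : ℕ, Lam S φ (initialSegs x) n = Real.exp (phiSup S φ (pref x n)) :=
      Lam_initialSegs_eq x
    simp only [he, Real.log_exp]
  -- bound the left-hand side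
  have hflb : ∀ n : ℕ, -C ≤ phiSup S φ (pref x n) / n := by
    intro n
    rcases Nat.eq_zero_or_pos n with rfl | hn
    · simp; linarith
    · have h1 : -((n:ℝ) * C) ≤ phiSup S φ (pref x n) := by
        have := neg_le_phiSup hS hC (pref_mem_lang hx n)
        simpa using this
      rw [le_div_iff₀ (by exact_mod_cast hn : (0:ℝ) < (n:ℝ))]
      calc -C * n = -((n:ℝ) * C) := by ring
        _ ≤ phiSup S φ (pref x n) := h1
  have hgtend : Filter.Tendsto (fun n : ℕ => (P - γ) + B / n) Filter.atTop (nhds ((P - γ) + 0)) :=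
    Filter.Tendsto.add tendsto_const_nhds (tendsto_const_div_atTop_nhds_zero_nat B)
  rw [add_zero] at hgtend
  have hub : ∀ᶠ n : ℕ in Filter.atTop, phiSup S φ (pref x n) / n ≤ (P - γ) + B / n := by
    rw [Filter.eventually_atTop]
    refine ⟨1, fun n hn => ?_⟩
    have hn0 : (0:ℝ) < (n:ℝ) := by exact_mod_cast hn
    have h1 := hB n
    calc phiSup S φ (pref x n) / n ≤ ((n:ℝ) * (P - γ) + B) / n :=
          div_le_div_of_nonneg_right h1 hn0.le
      _ = (P - γ) + B / n := by field_simp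
  have hmain : Filter.limsup (fun n : ℕ => phiSup S φ (pref x n) / n) Filter.atTop ≤ P - γ := by
    have hcob : Filter.IsCoboundedUnder (· ≤ ·) Filter.atTop
        (fun n : ℕ => phiSup S φ (pref x n) / n) :=
      Filter.IsBoundedUnder.isCoboundedUnder_le
        (Filter.isBoundedUnder_of ⟨-C, fun n => hflb n⟩)
    have hbd : Filter.IsBoundedUnder (· ≤ ·) Filter.atTop (fun n : ℕ => (P - γ) + B / n) :=
      hgtend.isBoundedUnder_le
    calc Filter.limsup (fun n : ℕ => phiSup S φ (pref x n) / n) Filter.atTop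
        ≤ Filter.limsup (fun n : ℕ => (P - γ) + B / n) Filter.atTop :=
          Filter.limsup_le_limsup hub hcob hbd
      _ = P - γ := hgtend.limsup_eq
  rw [hLHS, hRHS]
  calc Filter.limsup (fun n : ℕ => phiSup S φ (pref x n) / n) Filter.atTop ≤ P - γ := hmain
    _ < P := by linarith

end Subshift

namespace Subshift

/-- **Corollary.** Let `Σ` be a subshift of `{0,…,p}^ℕ` with at least two points
whose language has specification, and let `φ` be continuous on `Σ` with the
Bowen property. Then `P(φ, 𝒟) < P(φ, 𝓛)` for every `x ∈ Σ`, where `𝒟` is the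
set of initial segments of `x`. -/
theorem pressure_initialSegs_lt (p : ℕ) (S : Set (ℕ → ℕ)) (hS : IsSubshift p S)
    (htwo : ∃ x ∈ S, ∃ y ∈ S, x ≠ y) (hspec : HasSpec S)
    (φ : (ℕ → ℕ) → ℝ) (hcont : ContinuousOn φ S) (hφ : Bowen S φ)
    (x : ℕ → ℕ) (hx : x ∈ S) :
    pressure S φ (initialSegs x) < pressure S φ (lang S) := by
  exact pressure_initialSegs_lt_aux p S hS htwo hspec φ hcont hφ x hx

end Subshift
end
end
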